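/- arXiv:0708.0990 — 7 statements merged into one kernel-verified Lean document; each statement's English description precedes it below -/
import Mathlib

section
/- If A is the magic matrix associated to a bouquet with tree (R, γ), then A = Σ_{T ∈ R} γ(T)·A(T). -/
open BigOperators Matrix

/-- The magic matrix of a bouquet with multiplicities `m`. -/
def bouquetMatrix {n : ℕ} (m : Fin n → Fin n → ℚ) : Matrix (Fin n) (Fin n) ℚ :=
  fun i j => if i = j then ∑ k ∈ Finset.univ.erase i, m i k else -(m i j)

/-- The elementary magic matrix `A(T)`. -/
def AT (n : ℕ) (T : Finset (Fin n)) : Matrix (Fin n) (Fin n) ℚ :=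
  fun i j => if i ∈ T ∧ j ∈ T then (if i = j then (T.card : ℚ) - 1 else -1) else 0

/-- If `A` is the magic matrix of a bouquet whose associated tree is `(R, γ)`, then
`A = ∑_{T ∈ R} γ(T) · A(T)`.  Here `R` is the family of "rameaux" of the bouquet
(subsets `T` of cardinality `≥ 2` such that `m i j > m i k = m j k` for `i ≠ j` in `T`
and `k ∉ T`; note `T₀ = univ` satisfies this vacuously), `α T` is the minimum of the
`m i j` over distinct `i, j ∈ T`, `maj T` is the smallest element of `R` strictly
containing `T`, and `γ T = α T - α (maj T)` (with `γ T₀ = α T₀`). -/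
theorem stmt7 (n : ℕ) (hn : 2 ≤ n) (K : Type*) [Field K] (ν : K → WithTop ℚ)
    (hν0 : ∀ a, ν a = ⊤ ↔ a = 0)
    (hνadd : ∀ a b, min (ν a) (ν b) ≤ ν (a + b))
    (hνneg : ∀ a, ν (-a) = ν a)
    (a : Fin n → K) (ha : Function.Injective a)
    (m : Fin n → Fin n → ℚ)
    (hm : ∀ i j, i ≠ j → (m i j : WithTop ℚ) = ν (a i - a j))
    (R : Finset (Finset (Fin n)))
    (hR : ∀ T : Finset (Fin n), T ∈ R ↔
      (2 ≤ T.card ∧ ∀ i ∈ T, ∀ j ∈ T, i ≠ j → ∀ k, k ∉ T → m i k = m j k ∧ m i k < m i j))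
    (α : Finset (Fin n) → ℚ)
    (hαle : ∀ T ∈ R, ∀ i ∈ T, ∀ j ∈ T, i ≠ j → α T ≤ m i j)
    (hαeq : ∀ T ∈ R, ∃ i ∈ T, ∃ j ∈ T, i ≠ j ∧ α T = m i j)
    (maj : Finset (Fin n) → Finset (Fin n))
    (hmaj : ∀ T ∈ R, T ≠ Finset.univ →
      maj T ∈ R ∧ T ⊂ maj T ∧ ∀ S ∈ R, T ⊂ S → maj T ⊆ S)
    (γ : Finset (Fin n) → ℚ)
    (hγ : ∀ T ∈ R, γ T = if T = Finset.univ then α T else α T - α (maj T)) :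
    bouquetMatrix m = ∑ T ∈ R, γ T • AT n T := by
  classical
  -- symmetry of m
  have hsymm : ∀ i j : Fin n, i ≠ j → m i j = m j i := by
    intro i j hij
    have h : (m i j : WithTop ℚ) = (m j i : WithTop ℚ) := by
      rw [hm i j hij, hm j i hij.symm, show a i - a j = -(a j - a i) by ring, hνneg]
    exact_mod_cast h
  -- ultrametric inequality
  have hultra : ∀ i j k : Fin n, i ≠ j → j ≠ k → i ≠ k →
      min (m i j) (m j k) ≤ m i k := by
    intro i j k hij hjk hik
    have h := hνadd (a i - a j) (a j - a k)
    rw [show a i - a j + (a j - a k) = a i - a k by ring] at h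
    have h2 : ((min (m i j) (m j k) : ℚ) : WithTop ℚ) ≤ (m i k : WithTop ℚ) := by
      rw [WithTop.coe_min, hm i j hij, hm j k hjk, hm i k hik]
      exact h
    exact_mod_cast h2
  -- "two of three" : if m j k < m i j then m i k = m j k
  have htwo : ∀ i j k : Fin n, i ≠ j → j ≠ k → i ≠ k → m j k < m i j →
      m i k = m j k := by
    intro i j k hij hjk hik hlt
    have h1 : m j k ≤ m i k := by
      have := hultra i j k hij hjk hik
      rw [min_eq_right hlt.le] at this
      exact this
    have h2 : m i k ≤ m j k := by
      have h := hultra j i k hij.symm hik hjk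
      rw [hsymm j i hij.symm] at h
      rcases min_le_iff.mp h with h' | h'
      · exact absurd h' (not_le.mpr hlt)
      · exact h'
    exact le_antisymm h2 h1
  -- chain property: rameaux sharing a point are nested
  have hchain : ∀ T, T ∈ R → ∀ S, S ∈ R → ∀ x, x ∈ T → x ∈ S → T ⊆ S ∨ S ⊆ T := by
    intro T hT S hS x hxT hxS
    by_contra hc
    push_neg at hc
    obtain ⟨hTS, hST⟩ := hc
    obtain ⟨t, htT, htS⟩ := Finset.not_subset.mp hTS
    obtain ⟨s, hsS, hsT⟩ := Finset.not_subset.mp hST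
    have hxt : x ≠ t := fun h => htS (h ▸ hxS)
    have hxs : x ≠ s := fun h => hsT (h ▸ hxT)
    have hts : t ≠ s := fun h => hsT (h ▸ htT)
    obtain ⟨e1, l1⟩ := ((hR T).mp hT).2 x hxT t htT hxt s hsT
    obtain ⟨e2, l2⟩ := ((hR S).mp hS).2 x hxS s hsS hxs t htS
    have hsy := hsymm t s hts
    linarith
  -- univ is a rameau
  have huniv : (Finset.univ : Finset (Fin n)) ∈ R := by
    rw [hR]
    refine ⟨by simpa using hn, ?_⟩
    intro _ _ _ _ _ k hk
    exact absurd (Finset.mem_univ k) hk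
  -- sum over supersets of univ
  have hfiltuniv : R.filter (fun S => Finset.univ ⊆ S) = {Finset.univ} := by
    ext S
    simp only [Finset.mem_filter, Finset.mem_singleton, Finset.univ_subset_iff]
    constructor
    · rintro ⟨-, h⟩; exact h
    · rintro rfl; exact ⟨huniv, rfl⟩
  -- telescoping sum
  have htel : ∀ N : ℕ, ∀ T₀, T₀ ∈ R → n - T₀.card ≤ N →
      ∑ T ∈ R.filter (fun S => T₀ ⊆ S), γ T = α T₀ := by
    intro N
    induction N with
    | zero =>
      intro T₀ hT₀ hc
      have hcard : T₀.card ≤ n := by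
        simpa using Finset.card_le_univ T₀
      have hcn : T₀.card = Fintype.card (Fin n) := by simp; omega
      have hu : T₀ = Finset.univ := Finset.eq_univ_of_card T₀ hcn
      subst hu
      rw [hfiltuniv, Finset.sum_singleton, hγ _ huniv, if_pos rfl]
    | succ N ih =>
      intro T₀ hT₀ hc
      by_cases hu : T₀ = Finset.univ
      · subst hu
        rw [hfiltuniv, Finset.sum_singleton, hγ _ huniv, if_pos rfl]
      · obtain ⟨hmR, hss, hmin⟩ := hmaj T₀ hT₀ hu
        have hsplit : R.filter (fun S => T₀ ⊆ S)
            = insert T₀ (R.filter (fun S => maj T₀ ⊆ S)) := by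
          ext S
          simp only [Finset.mem_filter, Finset.mem_insert]
          constructor
          · rintro ⟨hS, hTS⟩
            by_cases h : S = T₀
            · exact Or.inl h
            · exact Or.inr ⟨hS, hmin S hS
                (Finset.ssubset_iff_subset_ne.mpr ⟨hTS, fun e => h e.symm⟩)⟩
          · rintro (rfl | ⟨hS, hMS⟩)
            · exact ⟨hT₀, subset_rfl⟩
            · exact ⟨hS, hss.subset.trans hMS⟩
        have hnotmem : T₀ ∉ R.filter (fun S => maj T₀ ⊆ S) := by
          simp only [Finset.mem_filter]
          rintro ⟨-, h⟩
          exact hss.not_subset h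
        have h1 := Finset.card_lt_card hss
        have hcard2 : n - (maj T₀).card ≤ N := by omega
        rw [hsplit, Finset.sum_insert hnotmem, ih (maj T₀) hmR hcard2,
          hγ T₀ hT₀, if_neg hu]
        ring
  -- key lemma : the sum of γ over rameaux containing i and j is m i j
  have hkey : ∀ i j : Fin n, i ≠ j →
      ∑ T ∈ R.filter (fun T => i ∈ T ∧ j ∈ T), γ T = m i j := by
    intro i j hij
    set B := Finset.univ.filter (fun k => k = i ∨ m i j ≤ m i k) with hBdef
    have hmemB : ∀ k, k ∈ B ↔ (k = i ∨ m i j ≤ m i k) := by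
      intro k; simp [hBdef]
    have hiB : i ∈ B := (hmemB i).mpr (Or.inl rfl)
    have hjB : j ∈ B := (hmemB j).mpr (Or.inr le_rfl)
    -- pairs in B have distance at least m i j
    have hBpair : ∀ k ∈ B, ∀ l ∈ B, k ≠ l → m i j ≤ m k l := by
      intro k hk l hl hkl
      rw [hmemB] at hk hl
      by_cases hki : k = i
      · rw [hki]
        exact hl.resolve_left (fun h => hkl (hki.trans h.symm))
      · by_cases hli : l = i
        · rw [hli]
          have hk' := hk.resolve_left hki
          have hs := hsymm k i hki
          linarith
        · have hk' := hk.resolve_left hki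
          have hl' := hl.resolve_left hli
          have hu := hultra k i l hki (fun h => hli h.symm) hkl
          have hs := hsymm k i hki
          exact le_trans (le_min (by linarith) hl') hu
    -- B is a rameau
    have hBR : B ∈ R := by
      rw [hR]
      constructor
      · exact Finset.one_lt_card_iff.mpr ⟨i, j, hiB, hjB, hij⟩
      · intro p hp q hq hpq k hkB
        have hk' : ¬(k = i ∨ m i j ≤ m i k) := fun h => hkB ((hmemB k).mpr h)
        push_neg at hk'
        obtain ⟨hki, hkm⟩ := hk'
        have key : ∀ p' ∈ B, m p' k = m i k := by
          intro p' hp'B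
          by_cases h : p' = i
          · subst h; rfl
          · have hp'm : m i j ≤ m i p' := ((hmemB p').mp hp'B).resolve_left h
            have hpk : p' ≠ k := fun e => hkB (e ▸ hp'B)
            have hs := hsymm p' i h
            exact htwo p' i k h (fun e => hki e.symm) hpk (by linarith)
        have e1 := key p hp
        have e2 := key q hq
        refine ⟨e1.trans e2.symm, ?_⟩
        have := hBpair p hp q hq hpq
        linarith
    -- minimal rameau containing i and j
    have hCne : (R.filter (fun T => i ∈ T ∧ j ∈ T)).Nonempty :=
      ⟨B, Finset.mem_filter.mpr ⟨hBR, hiB, hjB⟩⟩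
    obtain ⟨T₁, hT₁C, hT₁min⟩ :=
      Finset.exists_min_image (R.filter (fun T => i ∈ T ∧ j ∈ T)) Finset.card hCne
    obtain ⟨hT₁R, hiT₁, hjT₁⟩ := Finset.mem_filter.mp hT₁C
    have hCeq : R.filter (fun T => i ∈ T ∧ j ∈ T) = R.filter (fun S => T₁ ⊆ S) := by
      ext S
      simp only [Finset.mem_filter]
      constructor
      · rintro ⟨hS, hiS, hjS⟩
        refine ⟨hS, ?_⟩
        rcases hchain S hS T₁ hT₁R i hiS hiT₁ with h | h
        · have he : S = T₁ := Finset.eq_of_subset_of_card_le h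
            (hT₁min S (Finset.mem_filter.mpr ⟨hS, hiS, hjS⟩))
          rw [he]
        · exact h
      · rintro ⟨hS, hTS⟩
        exact ⟨hS, hTS hiT₁, hTS hjT₁⟩
    have hsum : ∑ T ∈ R.filter (fun T => i ∈ T ∧ j ∈ T), γ T = α T₁ := by
      rw [hCeq]
      exact htel n T₁ hT₁R (by omega)
    have hT₁B : T₁ ⊆ B := by
      rcases hchain T₁ hT₁R B hBR i hiT₁ hiB with h | h
      · exact h
      · have he : B = T₁ := Finset.eq_of_subset_of_card_le h
          (hT₁min B (Finset.mem_filter.mpr ⟨hBR, hiB, hjB⟩))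
        rw [he]
    have h1 : α T₁ ≤ m i j := hαle T₁ hT₁R i hiT₁ j hjT₁ hij
    obtain ⟨i', hi', j', hj', hij', heq⟩ := hαeq T₁ hT₁R
    have h2 : m i j ≤ α T₁ := heq ▸ hBpair i' (hT₁B hi') j' (hT₁B hj') hij'
    rw [hsum]
    exact le_antisymm h1 h2
  -- conclusion, entrywise
  ext i j
  have hRHS : (∑ T ∈ R, γ T • AT n T) i j = ∑ T ∈ R, γ T * AT n T i j := by
    simp [Matrix.sum_apply, Matrix.smul_apply, smul_eq_mul]
  by_cases hij : i = j
  · subst hij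
    rw [hRHS]
    have hterm : ∀ T ∈ R, γ T * AT n T i i
        = ∑ k ∈ Finset.univ.erase i, (if i ∈ T ∧ k ∈ T then γ T else 0) := by
      intro T hT
      by_cases hiT : i ∈ T
      · have he : (Finset.univ.erase i).filter (fun k => i ∈ T ∧ k ∈ T) = T.erase i := by
          ext k
          simp only [Finset.mem_filter, Finset.mem_erase, Finset.mem_univ, and_true, true_and]
          tauto
        rw [← Finset.sum_filter, he, Finset.sum_const, Finset.card_erase_of_mem hiT,
          nsmul_eq_mul]
        have hc : ((T.card - 1 : ℕ) : ℚ) = (T.card : ℚ) - 1 := by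
          have h1 : 1 ≤ T.card := Finset.card_pos.mpr ⟨i, hiT⟩
          push_cast [h1]
          ring
        rw [hc]
        simp only [AT, hiT, and_self, if_true, if_pos rfl]
        ring
      · simp [AT, hiT]
    rw [Finset.sum_congr rfl hterm, Finset.sum_comm]
    simp only [bouquetMatrix, if_pos rfl]
    apply Finset.sum_congr rfl
    intro k hk
    have hki : k ≠ i := (Finset.mem_erase.mp hk).1
    rw [← Finset.sum_filter]
    exact (hkey i k (Ne.symm hki)).symm
  · rw [hRHS]
    simp only [bouquetMatrix, if_neg hij]
    have hterm : ∀ T ∈ R, γ T * AT n T i j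
        = if i ∈ T ∧ j ∈ T then -γ T else 0 := by
      intro T hT
      by_cases h : i ∈ T ∧ j ∈ T
      · simp only [AT, if_pos h, if_neg hij]
        ring
      · simp [AT, h]
    rw [Finset.sum_congr rfl hterm, ← Finset.sum_filter]
    rw [show ∑ T ∈ R.filter (fun T => i ∈ T ∧ j ∈ T), -γ T
        = -∑ T ∈ R.filter (fun T => i ∈ T ∧ j ∈ T), γ T by
      rw [Finset.sum_neg_distrib]]
    rw [hkey i j hij]
end

section
/- For a bouquet of branches with tree (R, γ), the intersection multiplicities satisfy m_{i,j} = Σ_{T ∈ R, {i,j} ⊆ T} γ(T) for all i ≠ j. -/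
open BigOperators Matrix

/-- If `A` is the magic matrix of a bouquet whose associated tree is `(R, γ)`, then
`m i j = ∑_{T ∈ R, {i,j} ⊆ T} γ(T)` for all `i ≠ j`.  Here `R` is the family of "rameaux" of the bouquet
(subsets `T` of cardinality `≥ 2` such that `m i j > m i k = m j k` for `i ≠ j` in `T`
and `k ∉ T`; note `T₀ = univ` satisfies this vacuously), `α T` is the minimum of the
`m i j` over distinct `i, j ∈ T`, `maj T` is the smallest element of `R` strictly
containing `T`, and `γ T = α T - α (maj T)` (with `γ T₀ = α T₀`). -/
theorem stmt8 (n : ℕ) (hn : 2 ≤ n) (K : Type*) [Field K] (ν : K → WithTop ℚ)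
    (hν0 : ∀ a, ν a = ⊤ ↔ a = 0)
    (hνadd : ∀ a b, min (ν a) (ν b) ≤ ν (a + b))
    (hνneg : ∀ a, ν (-a) = ν a)
    (a : Fin n → K) (ha : Function.Injective a)
    (m : Fin n → Fin n → ℚ)
    (hm : ∀ i j, i ≠ j → (m i j : WithTop ℚ) = ν (a i - a j))
    (R : Finset (Finset (Fin n)))
    (hR : ∀ T : Finset (Fin n), T ∈ R ↔
      (2 ≤ T.card ∧ ∀ i ∈ T, ∀ j ∈ T, i ≠ j → ∀ k, k ∉ T → m i k = m j k ∧ m i k < m i j))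
    (α : Finset (Fin n) → ℚ)
    (hαle : ∀ T ∈ R, ∀ i ∈ T, ∀ j ∈ T, i ≠ j → α T ≤ m i j)
    (hαeq : ∀ T ∈ R, ∃ i ∈ T, ∃ j ∈ T, i ≠ j ∧ α T = m i j)
    (maj : Finset (Fin n) → Finset (Fin n))
    (hmaj : ∀ T ∈ R, T ≠ Finset.univ →
      maj T ∈ R ∧ T ⊂ maj T ∧ ∀ S ∈ R, T ⊂ S → maj T ⊆ S)
    (γ : Finset (Fin n) → ℚ)
    (hγ : ∀ T ∈ R, γ T = if T = Finset.univ then α T else α T - α (maj T)) :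
    ∀ i j : Fin n, i ≠ j →
      m i j = ∑ T ∈ R.filter (fun T => i ∈ T ∧ j ∈ T), γ T := by
  -- basic ultrametric facts
  have msymm : ∀ i j : Fin n, i ≠ j → m i j = m j i := by
    intro i j h
    have h1 : (m i j : WithTop ℚ) = (m j i : WithTop ℚ) := by
      rw [hm i j h, hm j i h.symm, ← hνneg (a j - a i), neg_sub]
    exact_mod_cast h1
  have mtri : ∀ i j k : Fin n, i ≠ j → j ≠ k → i ≠ k → min (m i j) (m j k) ≤ m i k := by
    intro i j k hij hjk hik
    have h := hνadd (a i - a j) (a j - a k)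
    rw [sub_add_sub_cancel] at h
    rw [← hm i j hij, ← hm j k hjk, ← hm i k hik] at h
    exact_mod_cast h
  have mstrict : ∀ i j k : Fin n, i ≠ j → j ≠ k → i ≠ k → m i j < m j k → m i k = m i j := by
    intro i j k hij hjk hik hlt
    have h1 : m i j ≤ m i k := by
      have h := mtri i j k hij hjk hik
      rwa [min_eq_left hlt.le] at h
    have h2 := mtri i k j hik hjk.symm hij
    rw [msymm k j hjk.symm] at h2
    rcases le_or_gt (m i k) (m i j) with h | h
    · exact le_antisymm h h1
    · exact absurd h2 (not_le.mpr (lt_min h hlt))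
  have hchain : ∀ p q : Fin n, p ≠ q → ∀ T₁ ∈ R, ∀ T₂ ∈ R,
      p ∈ T₁ → q ∈ T₁ → p ∈ T₂ → q ∈ T₂ → T₁ ⊆ T₂ ∨ T₂ ⊆ T₁ := by
    intro p q hpq T₁ h1 T₂ h2 hp1 hq1 hp2 hq2
    by_contra hc
    push_neg at hc
    obtain ⟨hns1, hns2⟩ := hc
    obtain ⟨k, hk1, hk2⟩ := Finset.not_subset.mp hns1
    obtain ⟨l, hl2, hl1⟩ := Finset.not_subset.mp hns2
    have hki : k ≠ p := fun e => hk2 (e ▸ hp2)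
    have hli : l ≠ p := fun e => hl1 (e ▸ hp1)
    have c2 := ((hR T₂).mp h2).2 p hp2 l hl2 (Ne.symm hli) k hk2
    have c1 := ((hR T₁).mp h1).2 p hp1 k hk1 (Ne.symm hki) l hl1
    linarith [c1.2, c2.2]
  have huniv : (Finset.univ : Finset (Fin n)) ∈ R := by
    rw [hR]
    refine ⟨by simpa using hn, ?_⟩
    intro p _ q _ _ k hk
    exact absurd (Finset.mem_univ k) hk
  intro i j hij
  set S := R.filter (fun T => i ∈ T ∧ j ∈ T) with hSdef
  have hSmem : ∀ T, T ∈ S ↔ T ∈ R ∧ i ∈ T ∧ j ∈ T := by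
    intro T; simp [hSdef, Finset.mem_filter]
  have hUS : Finset.univ ∈ S := (hSmem _).mpr ⟨huniv, Finset.mem_univ _, Finset.mem_univ _⟩
  obtain ⟨T₀, hT₀S, hT₀min⟩ := S.exists_min_image Finset.card ⟨_, hUS⟩
  obtain ⟨hT₀R, hiT₀, hjT₀⟩ := (hSmem _).mp hT₀S
  have hT₀sub : ∀ U ∈ S, T₀ ⊆ U := by
    intro U hU
    obtain ⟨hUR, hiU, hjU⟩ := (hSmem _).mp hU
    rcases hchain i j hij T₀ hT₀R U hUR hiT₀ hjT₀ hiU hjU with h | h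
    · exact h
    · exact (Finset.eq_of_subset_of_card_le h (hT₀min U hU)).ge
  have hα0 : α T₀ = m i j := by
    refine le_antisymm (hαle T₀ hT₀R i hiT₀ j hjT₀ hij) ?_
    by_contra hlt'
    rw [not_le] at hlt'
    set c := α T₀ with hc
    obtain ⟨i', hi', j', hj', hij', hαw⟩ := hαeq T₀ hT₀R
    set U := T₀.filter (fun k => k = i ∨ c < m i k) with hUdef
    have hiU : i ∈ U := Finset.mem_filter.mpr ⟨hiT₀, Or.inl rfl⟩
    have hjU : j ∈ U := Finset.mem_filter.mpr ⟨hjT₀, Or.inr hlt'⟩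
    have hUsub : U ⊆ T₀ := Finset.filter_subset _ _
    have hmemU : ∀ p ∈ U, p ≠ i → c < m i p := by
      intro p hp hpi
      rcases (Finset.mem_filter.mp hp).2 with h | h
      · exact absurd h hpi
      · exact h
    have hU1 : ∀ p ∈ U, ∀ q ∈ U, p ≠ q → c < m p q := by
      intro p hp q hq hpq
      by_cases hpi : p = i
      · subst hpi; exact hmemU q hq (Ne.symm hpq)
      · by_cases hqi : q = i
        · rw [hqi, ← msymm i p (Ne.symm hpi)]
          exact hmemU p hp hpi
        · have h1 := hmemU p hp hpi
          have h2 := hmemU q hq hqi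
          have h3 := mtri p i q hpi (fun e => hqi e.symm) hpq
          rw [msymm i p (Ne.symm hpi)] at h1
          calc c < min (m p i) (m i q) := lt_min h1 h2
            _ ≤ m p q := h3
    have hkle : ∀ k ∈ T₀, k ∉ U → m i k ≤ c := by
      intro k hkT hkU
      by_contra h
      exact hkU (Finset.mem_filter.mpr ⟨hkT, Or.inr (not_le.mp h)⟩)
    have hU2 : ∀ p ∈ U, ∀ k ∈ T₀, k ∉ U → m p k = m i k := by
      intro p hp k hkT hkU
      have hki : k ≠ i := fun e => hkU (e ▸ hiU)
      by_cases hpi : p = i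
      · rw [hpi]
      · have hpk : p ≠ k := fun e => hkU (e ▸ hp)
        have h1 : c < m i p := hmemU p hp hpi
        have h2 : m k i < m i p := by
          rw [msymm k i hki]
          exact lt_of_le_of_lt (hkle k hkT hkU) h1
        have h3 := mstrict k i p hki (fun e => hpi e.symm) (Ne.symm hpk) h2
        rw [msymm p k hpk, h3, msymm k i hki]
    have hUR : U ∈ R := by
      rw [hR]
      constructor
      · exact Finset.one_lt_card.mpr ⟨i, hiU, j, hjU, hij⟩
      · intro p hp q hq hpq k hkU
        by_cases hkT : k ∈ T₀
        · constructor
          · rw [hU2 p hp k hkT hkU, hU2 q hq k hkT hkU]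
          · calc m p k = m i k := hU2 p hp k hkT hkU
              _ ≤ c := hkle k hkT hkU
              _ < m p q := hU1 p hp q hq hpq
        · exact ((hR T₀).mp hT₀R).2 p (hUsub hp) q (hUsub hq) hpq k hkT
    have hUS' : U ∈ S := (hSmem _).mpr ⟨hUR, hiU, hjU⟩
    have hsub' : T₀ ⊆ U := hT₀sub U hUS'
    have hUeq : U = T₀ := Finset.Subset.antisymm hUsub hsub'
    have hi'U : i' ∈ U := hUeq ▸ hi'
    have hj'U : j' ∈ U := hUeq ▸ hj'
    have hfin := hU1 i' hi'U j' hj'U hij'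
    rw [← hαw] at hfin
    exact lt_irrefl _ hfin
  have key : ∀ d : ℕ, ∀ T, T ∈ S → n - T.card = d →
      ∑ U ∈ S.filter (fun U => T ⊆ U), γ U = α T := by
    intro d
    induction d using Nat.strong_induction_on with
    | _ d ih =>
      intro T hTS hd
      obtain ⟨hTR, hiT, hjT⟩ := (hSmem _).mp hTS
      by_cases hTu : T = Finset.univ
      · subst hTu
        have hfil : S.filter (fun U => Finset.univ ⊆ U) = {Finset.univ} := by
          ext U
          simp only [Finset.mem_filter, Finset.mem_singleton]
          constructor
          · rintro ⟨_, h⟩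
            exact Finset.univ_subset_iff.mp h
          · rintro rfl
            exact ⟨hUS, Finset.Subset.refl _⟩
        rw [hfil, Finset.sum_singleton, hγ _ huniv, if_pos rfl]
      · obtain ⟨hmR, hmss, hmmin⟩ := hmaj T hTR hTu
        have hmS : maj T ∈ S := (hSmem _).mpr ⟨hmR, hmss.subset hiT, hmss.subset hjT⟩
        have hsplit : S.filter (fun U => T ⊆ U) = insert T (S.filter (fun U => maj T ⊆ U)) := by
          ext U
          simp only [Finset.mem_filter, Finset.mem_insert]
          constructor
          · rintro ⟨hUS', hTU⟩
            by_cases hUT : U = T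
            · exact Or.inl hUT
            · exact Or.inr ⟨hUS', hmmin U ((hSmem U).mp hUS').1
                (Finset.ssubset_iff_subset_ne.mpr ⟨hTU, Ne.symm hUT⟩)⟩
          · rintro (rfl | ⟨hUS', hmU⟩)
            · exact ⟨hTS, Finset.Subset.refl _⟩
            · exact ⟨hUS', hmss.subset.trans hmU⟩
        have hTnot : T ∉ S.filter (fun U => maj T ⊆ U) := by
          simp only [Finset.mem_filter]
          exact fun h => hmss.not_subset h.2
        have hcard : T.card < (maj T).card := Finset.card_lt_card hmss
        have hcard2 : (maj T).card ≤ n := by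
          have h := Finset.card_le_univ (maj T)
          simpa using h
        rw [hsplit, Finset.sum_insert hTnot,
          ih (n - (maj T).card) (by omega) (maj T) hmS rfl, hγ T hTR, if_neg hTu]
        ring
  have hfull : S.filter (fun U => T₀ ⊆ U) = S :=
    Finset.filter_eq_self.mpr (fun U hU => hT₀sub U hU)
  have hsum := key (n - T₀.card) T₀ hT₀S rfl
  rw [hfull] at hsum
  rw [hsum]
  exact hα0.symm
end

section
/- Given a tree species R on {1,…,n}, the rational span of {A(T) : T ∈ R} is a commutative ℚ-subalgebra of M_n(ℚ) consisting of symmetric magic matrices of sum zero, all simultaneously diagonalizable, and the family {A(T) : T ∈ R} is linearly independent. -/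
open BigOperators Matrix

/-- A matrix is *magic* with sum `c` if all of its row sums and column sums equal `c`. -/
def IsMagic {n : ℕ} {K : Type*} [AddCommMonoid K] (A : Matrix (Fin n) (Fin n) K) (c : K) : Prop :=
  (∀ i, ∑ j, A i j = c) ∧ (∀ j, ∑ i, A i j = c)

namespace Stmt9Aux

variable {n : ℕ}

def ind (T : Finset (Fin n)) : Fin n → ℚ := fun i => if i ∈ T then 1 else 0

lemma sum_ind (T S : Finset (Fin n)) : ∑ k ∈ T, ind S k = ((T ∩ S).card : ℚ) := by
  simp [ind, Finset.sum_boole, Finset.filter_mem_eq_inter]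

lemma dot_ind (S T : Finset (Fin n)) : ind S ⬝ᵥ ind T = ((S ∩ T).card : ℚ) := by
  have h : ∀ k, ind S k * ind T k = if k ∈ S ∩ T then (1:ℚ) else 0 := by
    intro k; by_cases hS : k ∈ S <;> by_cases hT : k ∈ T <;> simp [ind, hS, hT]
  simp only [dotProduct, h]
  rw [Finset.sum_boole]
  congr 1
  apply Finset.card_nbij id (fun a ha => by simp at ha ⊢; exact ⟨ha.1, ha.2⟩)
    (fun a ha b hb hab => hab) (fun a ha => ⟨a, by simp at ha ⊢; exact ⟨ha.1, ha.2⟩, rfl⟩)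

lemma AT_eq (T : Finset (Fin n)) :
    AT n T = (T.card : ℚ) • Matrix.diagonal (ind T) - Matrix.vecMulVec (ind T) (ind T) := by
  ext i j
  by_cases hi : i ∈ T <;> by_cases hj : j ∈ T <;> by_cases hij : i = j <;>
    simp [AT, ind, Matrix.diagonal, Matrix.vecMulVec_apply, hi, hj, hij]

-- product building blocks
lemma diag_mul_vmv (d u v : Fin n → ℚ) :
    Matrix.diagonal d * Matrix.vecMulVec u v = Matrix.vecMulVec (d * u) v := by
  ext i j; simp [Matrix.diagonal_mul, Matrix.vecMulVec_apply, mul_assoc]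

lemma vmv_mul_diag (u v d : Fin n → ℚ) :
    Matrix.vecMulVec u v * Matrix.diagonal d = Matrix.vecMulVec u (v * d) := by
  ext i j; simp [Matrix.mul_diagonal, Matrix.vecMulVec_apply, mul_assoc]

lemma vmv_mul_vmv (u v u' v' : Fin n → ℚ) :
    Matrix.vecMulVec u v * Matrix.vecMulVec u' v' = (v ⬝ᵥ u') • Matrix.vecMulVec u v' := by
  ext i j
  simp only [Matrix.mul_apply, Matrix.vecMulVec_apply, Matrix.smul_apply, dotProduct,
    smul_eq_mul, Finset.sum_mul]
  exact Finset.sum_congr rfl (fun k _ => by ring)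

lemma ind_mul_ind (S T : Finset (Fin n)) : ind S * ind T = ind (S ∩ T) := by
  funext k; by_cases hS : k ∈ S <;> by_cases hT : k ∈ T <;> simp [ind, hS, hT]


lemma AT_mul_expand (S T : Finset (Fin n)) :
    AT n S * AT n T =
      ((S.card : ℚ) * T.card) • Matrix.diagonal (ind (S ∩ T))
      - (S.card : ℚ) • Matrix.vecMulVec (ind (S ∩ T)) (ind T)
      - (T.card : ℚ) • Matrix.vecMulVec (ind S) (ind (S ∩ T))
      + ((S ∩ T).card : ℚ) • Matrix.vecMulVec (ind S) (ind T) := by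
  have hmul : (fun i => ind S i * ind T i) = ind (S ∩ T) := ind_mul_ind S T
  rw [AT_eq, AT_eq, sub_mul, mul_sub, mul_sub]
  simp only [smul_mul_assoc, mul_smul_comm, Matrix.diagonal_mul_diagonal, diag_mul_vmv,
    vmv_mul_diag, vmv_mul_vmv, dot_ind]
  rw [show ((ind S) * (ind T)) = ind (S ∩ T) from ind_mul_ind S T]
  rw [show (diagonal fun i => ind S i * ind T i) = diagonal (ind (S ∩ T)) by rw [hmul]]
  module

lemma AT_mul_of_disjoint {S T : Finset (Fin n)} (h : Disjoint S T) :
    AT n S * AT n T = 0 := by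
  rw [AT_mul_expand, Finset.disjoint_iff_inter_eq_empty.mp h]
  have h0 : ind (∅ : Finset (Fin n)) = 0 := by funext k; simp [ind]
  have z1 : ∀ u : Fin n → ℚ, Matrix.vecMulVec (0 : Fin n → ℚ) u = 0 := by
    intro u; ext i j; simp [Matrix.vecMulVec_apply]
  have z2 : ∀ u : Fin n → ℚ, Matrix.vecMulVec u (0 : Fin n → ℚ) = 0 := by
    intro u; ext i j; simp [Matrix.vecMulVec_apply]
  simp [h0, z1, z2]

lemma AT_mul_of_subset {S T : Finset (Fin n)} (h : S ⊆ T) :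
    AT n S * AT n T = (T.card : ℚ) • AT n S ∧ AT n T * AT n S = (T.card : ℚ) • AT n S := by
  have h1 : S ∩ T = S := Finset.inter_eq_left.mpr h
  have h2 : T ∩ S = S := Finset.inter_eq_right.mpr h
  constructor
  · rw [AT_mul_expand, h1, AT_eq]
    module
  · rw [AT_mul_expand, h2, AT_eq]
    module


lemma AT_mulVec (T : Finset (Fin n)) (v : Fin n → ℚ) (i : Fin n) :
    (AT n T *ᵥ v) i = if i ∈ T then (T.card : ℚ) * v i - ∑ k ∈ T, v k else 0 := by
  simp only [Matrix.mulVec, dotProduct, AT]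
  by_cases hi : i ∈ T
  · simp only [hi, true_and, if_true]
    have h : ∀ k : Fin n, (if k ∈ T then (if i = k then (T.card : ℚ) - 1 else -1) else 0) * v k
        = if k ∈ T then (if i = k then ((T.card : ℚ) - 1) * v k else - v k) else 0 := by
      intro k; by_cases hk : k ∈ T <;> by_cases hik : i = k <;> simp [hk, hik] <;> ring
    simp only [h]
    have h2 : ∀ k ∈ T.erase i, (if i = k then ((T.card : ℚ) - 1) * v k else - v k) = - v k := by
      intro k hk
      rw [if_neg]
      intro he; exact (Finset.ne_of_mem_erase hk) he.symm
    rw [Finset.sum_ite_mem, Finset.univ_inter,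
      ← Finset.add_sum_erase _ _ hi, if_pos rfl,
      Finset.sum_congr rfl h2,
      ← Finset.add_sum_erase _ v hi]
    rw [Finset.sum_neg_distrib]
    ring
  · simp only [hi, false_and, if_false, zero_mul, Finset.sum_const_zero]

lemma AT_mulVec_of_const {T : Finset (Fin n)} {v : Fin n → ℚ} {a : ℚ}
    (h : ∀ k ∈ T, v k = a) : AT n T *ᵥ v = 0 := by
  funext i
  rw [AT_mulVec]
  by_cases hi : i ∈ T
  · rw [if_pos hi, Finset.sum_congr rfl h, Finset.sum_const, h i hi]
    simp [mul_comm]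
  · simp [hi]

lemma AT_mulVec_of_support {T : Finset (Fin n)} {v : Fin n → ℚ}
    (hsupp : ∀ k, k ∉ T → v k = 0) (hsum : ∑ k ∈ T, v k = 0) :
    AT n T *ᵥ v = (T.card : ℚ) • v := by
  funext i
  rw [AT_mulVec]
  by_cases hi : i ∈ T
  · simp [hi, hsum]
  · simp [hi, hsupp i hi]

lemma AT_transpose (T : Finset (Fin n)) : (AT n T)ᵀ = AT n T := by
  ext i j
  simp only [Matrix.transpose_apply, AT]
  by_cases hij : i = j
  · subst hij; rfl
  · by_cases hi : i ∈ T <;> by_cases hj : j ∈ T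
    · rw [if_pos (show j ∈ T ∧ i ∈ T from ⟨hj, hi⟩), if_pos (show i ∈ T ∧ j ∈ T from ⟨hi, hj⟩),
        if_neg (show ¬ j = i from fun h => hij h.symm), if_neg hij]
    · rw [if_neg (show ¬(j ∈ T ∧ i ∈ T) from fun h => hj h.1),
        if_neg (show ¬(i ∈ T ∧ j ∈ T) from fun h => hj h.2)]
    · rw [if_neg (show ¬(j ∈ T ∧ i ∈ T) from fun h => hi h.2),
        if_neg (show ¬(i ∈ T ∧ j ∈ T) from fun h => hi h.1)]
    · rw [if_neg (show ¬(j ∈ T ∧ i ∈ T) from fun h => hi h.2),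
        if_neg (show ¬(i ∈ T ∧ j ∈ T) from fun h => hi h.1)]

lemma AT_rowsum (T : Finset (Fin n)) (i : Fin n) : ∑ j, AT n T i j = 0 := by
  have h := AT_mulVec T (fun _ => (1:ℚ)) i
  simp only [Matrix.mulVec, dotProduct, mul_one] at h
  rw [h]
  by_cases hi : i ∈ T <;> simp [hi, mul_comm]

lemma dot_eq_zero_of {S : Finset (Fin n)} {w u : Fin n → ℚ} {a : ℚ}
    (hw : ∀ k, k ∉ S → w k = 0) (hsum : ∑ k ∈ S, w k = 0) (hu : ∀ k ∈ S, u k = a) :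
    w ⬝ᵥ u = 0 := by
  unfold dotProduct
  rw [← Finset.sum_subset (Finset.subset_univ S) (fun k _ hk => by rw [hw k hk, zero_mul])]
  have : ∀ k ∈ S, w k * u k = w k * a := fun k hk => by rw [hu k hk]
  rw [Finset.sum_congr rfl this, ← Finset.sum_mul, hsum, zero_mul]


lemma exists_block {R : Finset (Finset (Fin n))}
    (hcard : ∀ T ∈ R, 2 ≤ T.card)
    (hnest : ∀ T1 ∈ R, ∀ T2 ∈ R, Disjoint T1 T2 ∨ T1 ⊆ T2 ∨ T2 ⊆ T1)
    {T0 : Finset (Fin n)} (hT0 : T0 ∈ R) {x : Fin n} (hx : x ∈ T0) :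
    ∃ B, x ∈ B ∧ B ⊆ T0 ∧ B ≠ T0 ∧ (B = {x} ∨ B ∈ R) ∧
      ∀ T' ∈ R, T' ⊆ T0 → T' ≠ T0 → x ∈ T' → T' ⊆ B := by
  classical
  set S := R.filter (fun T' => T' ⊆ T0 ∧ T' ≠ T0 ∧ x ∈ T') with hS
  by_cases hne : S.Nonempty
  · obtain ⟨B, hBS, hBmax⟩ := Finset.exists_max_image S Finset.card hne
    rw [hS, Finset.mem_filter] at hBS
    refine ⟨B, hBS.2.2.2, hBS.2.1, hBS.2.2.1, Or.inr hBS.1, ?_⟩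
    intro T' hT' h1 h2 h3
    have hT'S : T' ∈ S := by rw [hS, Finset.mem_filter]; exact ⟨hT', h1, h2, h3⟩
    have hcardle := hBmax T' hT'S
    rcases hnest T' hT' B hBS.1 with hd | hsub | hsub
    · exact absurd hBS.2.2.2 (Finset.disjoint_left.mp hd h3)
    · exact hsub
    · rw [Finset.eq_of_subset_of_card_le hsub hcardle]
  · refine ⟨{x}, Finset.mem_singleton_self x, Finset.singleton_subset_iff.mpr hx, ?_, Or.inl rfl, ?_⟩
    · intro h
      have := hcard T0 hT0
      rw [← h, Finset.card_singleton] at this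
      omega
    · intro T' hT' h1 h2 h3
      exact absurd ⟨T', by rw [hS, Finset.mem_filter]; exact ⟨hT', h1, h2, h3⟩⟩ hne

lemma eig {R : Finset (Finset (Fin n))}
    (hnest : ∀ T1 ∈ R, ∀ T2 ∈ R, Disjoint T1 T2 ∨ T1 ⊆ T2 ∨ T2 ⊆ T1)
    {T0 B : Finset (Fin n)} {x : Fin n}
    (hT0 : T0 ∈ R) (hxB : x ∈ B) (hBT0 : B ⊆ T0) (hBne : B ≠ T0)
    (hBR : B = {x} ∨ B ∈ R)
    (hBmax : ∀ T' ∈ R, T' ⊆ T0 → T' ≠ T0 → x ∈ T' → T' ⊆ B)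
    {T : Finset (Fin n)} (hT : T ∈ R) :
    AT n T *ᵥ ((T0.card : ℚ) • ind B - (B.card : ℚ) • ind T0)
      = (if T0 ⊆ T then (T.card : ℚ) else 0) •
          ((T0.card : ℚ) • ind B - (B.card : ℚ) • ind T0) := by
  classical
  set v := (T0.card : ℚ) • ind B - (B.card : ℚ) • ind T0 with hv
  have hvk : ∀ k, v k = if k ∈ B then (T0.card : ℚ) - B.card
      else if k ∈ T0 then -(B.card : ℚ) else 0 := by
    intro k
    by_cases hkB : k ∈ B
    · simp [hv, ind, hkB, hBT0 hkB]
    · by_cases hkT0 : k ∈ T0 <;> simp [hv, ind, hkB, hkT0]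
  have hsupp : ∀ k, k ∉ T0 → v k = 0 := fun k hk => by
    rw [hvk, if_neg (fun h => hk (hBT0 h)), if_neg hk]
  have hsum : ∑ k ∈ T0, v k = 0 := by
    rw [hv]
    simp only [Pi.sub_apply, Pi.smul_apply, smul_eq_mul]
    rw [Finset.sum_sub_distrib, ← Finset.mul_sum, ← Finset.mul_sum, sum_ind, sum_ind,
      Finset.inter_eq_right.mpr hBT0, Finset.inter_self]
    ring
  by_cases hsub : T0 ⊆ T
  · rw [if_pos hsub]
    exact AT_mulVec_of_support (fun k hk => hsupp k (fun h => hk (hsub h)))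
      ((Finset.sum_subset hsub (fun k _ hk => hsupp k hk)) ▸ hsum)
  · rw [if_neg hsub, zero_smul]
    have hTne : T ≠ T0 := fun h => hsub (h ▸ Finset.Subset.refl T)
    rcases hnest T hT T0 hT0 with hd | h1 | h2
    · exact AT_mulVec_of_const (a := 0) (fun k hk => hsupp k (Finset.disjoint_left.mp hd hk))
    · by_cases hxT : x ∈ T
      · have hTB := hBmax T hT h1 hTne hxT
        exact AT_mulVec_of_const (a := (T0.card : ℚ) - B.card)
          (fun k hk => by rw [hvk, if_pos (hTB hk)])
      · have halt : (∀ k ∈ T, k ∈ B) ∨ (∀ k ∈ T, k ∉ B) := by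
          rcases hBR with hB1 | hB2
          · right; intro k hk hkB
            rw [hB1, Finset.mem_singleton] at hkB
            exact hxT (hkB ▸ hk)
          · rcases hnest T hT B hB2 with hd' | h1' | h2'
            · right; exact fun k hk => Finset.disjoint_left.mp hd' hk
            · left; exact fun k hk => h1' hk
            · exact absurd (h2' hxB) hxT
        rcases halt with hall | hnone
        · exact AT_mulVec_of_const (a := (T0.card : ℚ) - B.card)
            (fun k hk => by rw [hvk, if_pos (hall k hk)])
        · exact AT_mulVec_of_const (a := -(B.card : ℚ))
            (fun k hk => by rw [hvk, if_neg (hnone k hk), if_pos (h1 hk)])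
    · exact absurd h2 hsub


lemma sum_mulVec {ι : Type*} (s : Finset ι) (f : ι → Matrix (Fin n) (Fin n) ℚ)
    (v : Fin n → ℚ) : (∑ i ∈ s, f i) *ᵥ v = ∑ i ∈ s, f i *ᵥ v := by
  induction s using Finset.cons_induction with
  | empty => simp [Matrix.zero_mulVec]
  | cons a t h ih => rw [Finset.sum_cons, Finset.sum_cons, Matrix.add_mulVec, ih]

lemma vval {T0 B : Finset (Fin n)} (hBT0 : B ⊆ T0) (k : Fin n) :
    ((T0.card : ℚ) • ind B - (B.card : ℚ) • ind T0) k
      = if k ∈ B then (T0.card : ℚ) - B.card else if k ∈ T0 then -(B.card : ℚ) else 0 := by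
  by_cases hkB : k ∈ B
  · simp [ind, hkB, hBT0 hkB]
  · by_cases hkT0 : k ∈ T0 <;> simp [ind, hkB, hkT0]

lemma vsupp {T0 B : Finset (Fin n)} (hBT0 : B ⊆ T0) :
    ∀ k, k ∉ T0 → ((T0.card : ℚ) • ind B - (B.card : ℚ) • ind T0) k = 0 := fun k hk => by
  rw [vval hBT0, if_neg (fun h => hk (hBT0 h)), if_neg hk]

lemma vsum_univ {T0 B : Finset (Fin n)} (hBT0 : B ⊆ T0) :
    ∑ k, ((T0.card : ℚ) • ind B - (B.card : ℚ) • ind T0) k = 0 := by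
  simp only [Pi.sub_apply, Pi.smul_apply, smul_eq_mul]
  rw [Finset.sum_sub_distrib, ← Finset.mul_sum, ← Finset.mul_sum]
  have h1 : ∑ k, ind B k = ((Finset.univ ∩ B).card : ℚ) := sum_ind Finset.univ B
  have h2 : ∑ k, ind T0 k = ((Finset.univ ∩ T0).card : ℚ) := sum_ind Finset.univ T0
  rw [h1, h2, Finset.univ_inter, Finset.univ_inter]
  ring

lemma vsum {T0 B : Finset (Fin n)} (hBT0 : B ⊆ T0) :
    ∑ k ∈ T0, ((T0.card : ℚ) • ind B - (B.card : ℚ) • ind T0) k = 0 :=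
  (Finset.sum_subset (Finset.subset_univ T0) (fun k _ hk => vsupp hBT0 k hk)).trans
    (vsum_univ hBT0)

lemma ones_dot_v {T0 B : Finset (Fin n)} (hBT0 : B ⊆ T0) :
    (fun _ => (1:ℚ)) ⬝ᵥ ((T0.card : ℚ) • ind B - (B.card : ℚ) • ind T0) = 0 := by
  unfold dotProduct
  simp only [one_mul]
  exact vsum_univ hBT0

lemma v_dot_v (T1 B1 T2 B2 : Finset (Fin n)) :
    ((T1.card : ℚ) • ind B1 - (B1.card : ℚ) • ind T1) ⬝ᵥ
      ((T2.card : ℚ) • ind B2 - (B2.card : ℚ) • ind T2)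
    = (T1.card : ℚ) * T2.card * (B1 ∩ B2).card - (T1.card : ℚ) * B2.card * (B1 ∩ T2).card
      - (B1.card : ℚ) * T2.card * (T1 ∩ B2).card + (B1.card : ℚ) * B2.card * (T1 ∩ T2).card := by
  simp only [sub_dotProduct, dotProduct_sub, smul_dotProduct, dotProduct_smul, dot_ind,
    smul_eq_mul]
  ring

end Stmt9Aux



/-- For a tree species `R` on `{1,…,n}`, the rational span of `{A(T) : T ∈ R}` is a
commutative (nonunital) subalgebra of symmetric magic matrices of sum zero, the family
`{A(T) : T ∈ R}` is linearly independent, and all these matrices are simultaneously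
diagonalizable. -/
theorem stmt9 (n : ℕ) (R : Finset (Finset (Fin n)))
    (huniv : Finset.univ ∈ R)
    (hcard : ∀ T ∈ R, 2 ≤ T.card)
    (hnest : ∀ T1 ∈ R, ∀ T2 ∈ R, Disjoint T1 T2 ∨ T1 ⊆ T2 ∨ T2 ⊆ T1) :
    (∀ X ∈ Submodule.span ℚ ((fun T => AT n T) '' ↑R),
      ∀ Y ∈ Submodule.span ℚ ((fun T => AT n T) '' ↑R),
        X * Y ∈ Submodule.span ℚ ((fun T => AT n T) '' ↑R) ∧ X * Y = Y * X) ∧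
    (∀ X ∈ Submodule.span ℚ ((fun T => AT n T) '' ↑R), Xᵀ = X ∧ IsMagic X 0) ∧
    LinearIndependent ℚ (fun T : {T // T ∈ R} => AT n T.val) ∧
    (∃ P : Matrix (Fin n) (Fin n) ℚ, IsUnit P ∧ ∀ T ∈ R, (P⁻¹ * AT n T * P).IsDiag) := by
  classical
  have hn2 : 2 ≤ n := by
    have := hcard _ huniv
    simpa using this
  have hn0 : 0 < n := by omega
  set Sp := Submodule.span ℚ ((fun T => AT n T) '' ↑R) with hSp
  have hgen : ∀ T1 ∈ R, ∀ T2 ∈ R,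
      AT n T1 * AT n T2 ∈ Sp ∧ AT n T1 * AT n T2 = AT n T2 * AT n T1 := by
    intro T1 h1 T2 h2
    have m1 : AT n T1 ∈ Sp := Submodule.subset_span ⟨T1, h1, rfl⟩
    have m2 : AT n T2 ∈ Sp := Submodule.subset_span ⟨T2, h2, rfl⟩
    rcases hnest T1 h1 T2 h2 with hd | hs | hs
    · rw [Stmt9Aux.AT_mul_of_disjoint hd, Stmt9Aux.AT_mul_of_disjoint hd.symm]
      exact ⟨Submodule.zero_mem _, rfl⟩
    · obtain ⟨e1, e2⟩ := Stmt9Aux.AT_mul_of_subset hs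
      rw [e1, e2]
      exact ⟨Submodule.smul_mem _ _ m1, rfl⟩
    · obtain ⟨e1, e2⟩ := Stmt9Aux.AT_mul_of_subset hs
      rw [e2, e1]
      exact ⟨Submodule.smul_mem _ _ m2, rfl⟩
  have key : ∀ X ∈ Sp, ∀ Y ∈ Sp, X * Y ∈ Sp ∧ X * Y = Y * X := by
    intro X hX
    induction hX using Submodule.span_induction with
    | mem x hx =>
      obtain ⟨T1, hT1, rfl⟩ := hx
      intro Y hY
      induction hY using Submodule.span_induction with
      | mem y hy =>
        obtain ⟨T2, hT2, rfl⟩ := hy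
        exact hgen T1 hT1 T2 hT2
      | zero => exact ⟨by rw [mul_zero]; exact Submodule.zero_mem _, by rw [mul_zero, zero_mul]⟩
      | add y z hy hz ihy ihz =>
        refine ⟨?_, ?_⟩
        · rw [mul_add]; exact Submodule.add_mem _ ihy.1 ihz.1
        · rw [mul_add, add_mul, ihy.2, ihz.2]
      | smul a y hy ihy =>
        refine ⟨?_, ?_⟩
        · rw [mul_smul_comm]; exact Submodule.smul_mem _ _ ihy.1
        · rw [mul_smul_comm, smul_mul_assoc, ihy.2]
    | zero =>
      intro Y hY
      exact ⟨by rw [zero_mul]; exact Submodule.zero_mem _, by rw [zero_mul, mul_zero]⟩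
    | add x z hx hz ihx ihz =>
      intro Y hY
      refine ⟨?_, ?_⟩
      · rw [add_mul]; exact Submodule.add_mem _ (ihx Y hY).1 (ihz Y hY).1
      · rw [add_mul, mul_add, (ihx Y hY).2, (ihz Y hY).2]
    | smul a x hx ihx =>
      intro Y hY
      refine ⟨?_, ?_⟩
      · rw [smul_mul_assoc]; exact Submodule.smul_mem _ _ (ihx Y hY).1
      · rw [smul_mul_assoc, mul_smul_comm, (ihx Y hY).2]
  have hsm : ∀ X ∈ Sp, Xᵀ = X ∧ IsMagic X 0 := by
    intro X hX
    induction hX using Submodule.span_induction with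
    | mem x hx =>
      obtain ⟨T, hT, rfl⟩ := hx
      refine ⟨Stmt9Aux.AT_transpose T, fun i => Stmt9Aux.AT_rowsum T i, fun j => ?_⟩
      have h := Stmt9Aux.AT_rowsum T j
      calc ∑ i, AT n T i j = ∑ i, (AT n T)ᵀ j i := by
            simp [Matrix.transpose_apply]
        _ = 0 := by rw [Stmt9Aux.AT_transpose]; exact h
    | zero => exact ⟨Matrix.transpose_zero, fun i => by simp, fun j => by simp⟩
    | add x y hx hy ihx ihy =>
      refine ⟨by rw [Matrix.transpose_add, ihx.1, ihy.1], fun i => ?_, fun j => ?_⟩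
      · simp only [Matrix.add_apply, Finset.sum_add_distrib, ihx.2.1 i, ihy.2.1 i, add_zero]
      · simp only [Matrix.add_apply, Finset.sum_add_distrib, ihx.2.2 j, ihy.2.2 j, add_zero]
    | smul a x hx ihx =>
      refine ⟨by rw [Matrix.transpose_smul, ihx.1], fun i => ?_, fun j => ?_⟩
      · simp only [Matrix.smul_apply, smul_eq_mul, ← Finset.mul_sum, ihx.2.1 i, mul_zero]
      · simp only [Matrix.smul_apply, smul_eq_mul, ← Finset.mul_sum, ihx.2.2 j, mul_zero]
  have hli : LinearIndependent ℚ (fun T : {T // T ∈ R} => AT n T.val) := by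
    rw [Fintype.linearIndependent_iff]
    intro g hg
    by_contra hne
    push_neg at hne
    obtain ⟨W0, hgW0⟩ := hne
    set s := Finset.univ.filter (fun T : {T // T ∈ R} => g T ≠ 0) with hs
    have hsne : s.Nonempty := ⟨W0, by rw [hs, Finset.mem_filter]; exact ⟨Finset.mem_univ _, hgW0⟩⟩
    obtain ⟨Tm, hTms, hTmax⟩ := Finset.exists_max_image s (fun T => T.val.card) hsne
    have hgTm : g Tm ≠ 0 := by
      rw [hs, Finset.mem_filter] at hTms
      exact hTms.2
    have hTmR : Tm.val ∈ R := Tm.2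
    have hTmne : Tm.val.Nonempty := Finset.card_pos.mp (by have := hcard _ hTmR; omega)
    obtain ⟨B, hxB, hBT, hBne, hBR, hBmax⟩ :=
      Stmt9Aux.exists_block hcard hnest hTmR (Tm.val.min'_mem hTmne)
    set x := Tm.val.min' hTmne with hxdef
    set v := (Tm.val.card : ℚ) • Stmt9Aux.ind B - (B.card : ℚ) • Stmt9Aux.ind Tm.val with hv
    have happ : ∀ T : {T // T ∈ R},
        AT n T.val *ᵥ v = (if Tm.val ⊆ T.val then (T.val.card : ℚ) else 0) • v :=
      fun T => Stmt9Aux.eig hnest hTmR hxB hBT hBne hBR hBmax T.2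
    have hsmv : (∑ T : {T // T ∈ R}, g T • AT n T.val) *ᵥ v = 0 := by
      rw [hg]; funext r; simp [Matrix.mulVec, dotProduct]
    have h0 := congrFun hsmv x
    have hexp : ((∑ T : {T // T ∈ R}, g T • AT n T.val) *ᵥ v) x
        = (∑ T : {T // T ∈ R}, g T * (if Tm.val ⊆ T.val then (T.val.card : ℚ) else 0)) * v x := by
      have h1 : (∑ T : {T // T ∈ R}, g T • AT n T.val) *ᵥ v
          = ∑ T : {T // T ∈ R}, g T • (AT n T.val *ᵥ v) := by
        rw [Stmt9Aux.sum_mulVec]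
        exact Finset.sum_congr rfl (fun T _ => Matrix.smul_mulVec _ _ _)
      rw [h1]
      rw [Finset.sum_apply]
      rw [Finset.sum_mul]
      refine Finset.sum_congr rfl (fun T _ => ?_)
      rw [happ T]
      by_cases h : Tm.val ⊆ T.val
      · simp only [h, if_true, Pi.smul_apply, smul_eq_mul]; ring
      · simp [h]
    rw [hexp] at h0
    have hvx : v x ≠ 0 := by
      have h1 : v x = (Tm.val.card : ℚ) - B.card := by
        rw [hv, Stmt9Aux.vval hBT, if_pos hxB]
      rw [h1]
      have : B.card < Tm.val.card :=
        Finset.card_lt_card (Finset.ssubset_iff_subset_ne.mpr ⟨hBT, hBne⟩)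
      have h2 : (B.card : ℚ) < (Tm.val.card : ℚ) := by exact_mod_cast this
      intro h3
      linarith
    have hcoef : ∑ T : {T // T ∈ R}, g T * (if Tm.val ⊆ T.val then (T.val.card : ℚ) else 0) = 0 :=
      by
      rcases mul_eq_zero.mp h0 with h | h
      · exact h
      · exact absurd h hvx
    rw [Finset.sum_eq_single Tm ?h1 ?h2] at hcoef
    · rw [if_pos (Finset.Subset.refl _)] at hcoef
      rcases mul_eq_zero.mp hcoef with h | h
      · exact hgTm h
      · have := hcard _ hTmR
        have : (0:ℚ) < Tm.val.card := by exact_mod_cast (by omega : 0 < Tm.val.card)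
        linarith
    case h1 =>
      intro T _ hTne
      by_cases hsub : Tm.val ⊆ T.val
      · have hvne : T.val ≠ Tm.val := fun h => hTne (Subtype.ext h)
        have hlt : Tm.val.card < T.val.card :=
          Finset.card_lt_card (Finset.ssubset_iff_subset_ne.mpr ⟨hsub, fun h => hvne h.symm⟩)
        have hgT : g T = 0 := by
          by_contra hgT
          have hTs : T ∈ s := by rw [hs, Finset.mem_filter]; exact ⟨Finset.mem_univ _, hgT⟩
          have := hTmax T hTs
          omega
        rw [hgT, zero_mul]
      · rw [if_neg hsub, mul_zero]
    case h2 => intro h; exact absurd (Finset.mem_univ Tm) h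
  refine ⟨key, hsm, hli, ?_⟩
  -- Part 4: simultaneous diagonalization
  -- choose minimal member M i containing i and a smaller element
  have hMex : ∀ i : Fin n, ∃ Mi : Finset (Fin n), 0 < (i : ℕ) →
      (Mi ∈ R ∧ i ∈ Mi ∧ (∃ j ∈ Mi, j < i) ∧
        ∀ T ∈ R, i ∈ T → (∃ j ∈ T, j < i) → Mi ⊆ T) := by
    intro i
    by_cases hi : 0 < (i : ℕ)
    · set S := R.filter (fun T => i ∈ T ∧ ∃ j ∈ T, j < i) with hSdef
      have hSne : S.Nonempty := by
        refine ⟨Finset.univ, ?_⟩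
        rw [hSdef, Finset.mem_filter]
        exact ⟨huniv, Finset.mem_univ i, ⟨⟨0, hn0⟩, Finset.mem_univ _, by
          rw [Fin.lt_def]; exact hi⟩⟩
      obtain ⟨Mi, hMiS, hMimin⟩ := Finset.exists_min_image S Finset.card hSne
      rw [hSdef, Finset.mem_filter] at hMiS
      refine ⟨Mi, fun _ => ⟨hMiS.1, hMiS.2.1, hMiS.2.2, ?_⟩⟩
      intro T hT h1 h2
      have hTS : T ∈ S := by rw [hSdef, Finset.mem_filter]; exact ⟨hT, h1, h2⟩
      have hle := hMimin T hTS
      rcases hnest Mi hMiS.1 T hT with hd | hs | hs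
      · exact absurd h1 (Finset.disjoint_left.mp hd hMiS.2.1)
      · exact hs
      · rw [Finset.eq_of_subset_of_card_le hs hle]
    · exact ⟨∅, fun h => absurd h hi⟩
  choose M hM using hMex
  have hBex : ∀ i : Fin n, ∃ Bi : Finset (Fin n), 0 < (i : ℕ) →
      (i ∈ Bi ∧ Bi ⊆ M i ∧ Bi ≠ M i ∧ (Bi = {i} ∨ Bi ∈ R) ∧
        ∀ T' ∈ R, T' ⊆ M i → T' ≠ M i → i ∈ T' → T' ⊆ Bi) := by
    intro i
    by_cases hi : 0 < (i : ℕ)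
    · obtain ⟨Bi, h⟩ := Stmt9Aux.exists_block hcard hnest (hM i hi).1 (hM i hi).2.1
      exact ⟨Bi, fun _ => h⟩
    · exact ⟨∅, fun h => absurd h hi⟩
  choose B hB using hBex
  have hMR : ∀ i : Fin n, 0 < (i:ℕ) → M i ∈ R := fun i hi => (hM i hi).1
  have hiM : ∀ i : Fin n, 0 < (i:ℕ) → i ∈ M i := fun i hi => (hM i hi).2.1
  have hMlt : ∀ i : Fin n, 0 < (i:ℕ) → ∃ j ∈ M i, j < i := fun i hi => (hM i hi).2.2.1
  have hMmin : ∀ i : Fin n, 0 < (i:ℕ) → ∀ T ∈ R, i ∈ T → (∃ j ∈ T, j < i) → M i ⊆ T :=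
    fun i hi => (hM i hi).2.2.2
  have hiB : ∀ i : Fin n, 0 < (i:ℕ) → i ∈ B i := fun i hi => (hB i hi).1
  have hBM : ∀ i : Fin n, 0 < (i:ℕ) → B i ⊆ M i := fun i hi => (hB i hi).2.1
  have hBneM : ∀ i : Fin n, 0 < (i:ℕ) → B i ≠ M i := fun i hi => (hB i hi).2.2.1
  have hBRor : ∀ i : Fin n, 0 < (i:ℕ) → (B i = {i} ∨ B i ∈ R) := fun i hi => (hB i hi).2.2.2.1
  have hBmax : ∀ i : Fin n, 0 < (i:ℕ) → ∀ T' ∈ R, T' ⊆ M i → T' ≠ M i → i ∈ T' → T' ⊆ B i :=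
    fun i hi => (hB i hi).2.2.2.2
  have hBge : ∀ i : Fin n, 0 < (i:ℕ) → ∀ k ∈ B i, ¬ (k < i) := by
    intro i hi k hk hlt
    rcases hBRor i hi with h1 | h2
    · rw [h1, Finset.mem_singleton] at hk
      subst hk
      exact lt_irrefl _ hlt
    · have hsub := hMmin i hi (B i) h2 (hiB i hi) ⟨k, hk, hlt⟩
      exact (hBneM i hi) (Finset.Subset.antisymm (hBM i hi) hsub)
  have hBcardpos : ∀ i : Fin n, 0 < (i:ℕ) → 0 < (B i).card :=
    fun i hi => Finset.card_pos.mpr ⟨i, hiB i hi⟩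
  have hMcardpos : ∀ i : Fin n, 0 < (i:ℕ) → 0 < (M i).card :=
    fun i hi => Finset.card_pos.mpr ⟨i, hiM i hi⟩
  -- disjointness of blocks with equal M
  have hBdisj : ∀ i j : Fin n, 0 < (i:ℕ) → 0 < (j:ℕ) → i ≠ j → M i = M j → Disjoint (B i) (B j) := by
    intro i j hi hj hij hMeq
    rw [Finset.disjoint_left]
    intro k hki hkj
    have hstep : ∀ a b : Fin n, 0 < (a:ℕ) → 0 < (b:ℕ) → a ≠ b → M a = M b → a ∈ B b → B b ⊆ B a := by
      intro a b ha hb hab hMab haBb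
      rcases hBRor b hb with h1 | h2
      · rw [h1, Finset.mem_singleton] at haBb
        exact absurd haBb hab
      · exact hBmax a ha (B b) h2 (by rw [hMab]; exact hBM b hb)
          (by rw [hMab]; exact hBneM b hb) haBb
    have hmem : i ∈ B j ∨ j ∈ B i := by
      rcases hBRor i hi with hi1 | hi2
      · left
        rw [hi1, Finset.mem_singleton] at hki
        rw [← hki]
        exact hkj
      · rcases hBRor j hj with hj1 | hj2
        · right
          rw [hj1, Finset.mem_singleton] at hkj
          rw [← hkj]
          exact hki
        · rcases hnest (B i) hi2 (B j) hj2 with hd | hs | hs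
          · exact absurd hkj (Finset.disjoint_left.mp hd hki)
          · left; exact hs (hiB i hi)
          · right; exact hs (hiB j hj)
    have hboth : i ∈ B j ∧ j ∈ B i := by
      rcases hmem with h | h
      · exact ⟨h, hstep i j hi hj hij hMeq h (hiB j hj)⟩
      · exact ⟨hstep j i hj hi (fun he => hij he.symm) hMeq.symm h (hiB i hi), h⟩
    have h3 := hBge i hi j hboth.2
    have h4 := hBge j hj i hboth.1
    exact hij (le_antisymm (not_lt.mp h3) (not_lt.mp h4))
  -- the eigenvector family
  set v : Fin n → Fin n → ℚ :=
    fun i => ((M i).card : ℚ) • Stmt9Aux.ind (B i) - ((B i).card : ℚ) • Stmt9Aux.ind (M i)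
    with hvdef
  set b : Fin n → Fin n → ℚ := fun i => if (i:ℕ) = 0 then (fun _ => (1:ℚ)) else v i with hbdef
  have hbv : ∀ i : Fin n, 0 < (i:ℕ) → b i = v i := by
    intro i hi
    rw [hbdef]
    exact if_neg (Nat.pos_iff_ne_zero.mp hi)
  set ev : Finset (Fin n) → Fin n → ℚ :=
    fun T i => if (i:ℕ) = 0 then 0 else (if M i ⊆ T then (T.card : ℚ) else 0) with hevdef
  have hev : ∀ T ∈ R, ∀ i, AT n T *ᵥ b i = ev T i • b i := by
    intro T hT i
    by_cases hi : (i:ℕ) = 0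
    · rw [hbdef, hevdef]
      simp only [hi, if_pos]
      rw [Stmt9Aux.AT_mulVec_of_const (a := 1) (fun k _ => rfl), zero_smul]
    · have hi' : 0 < (i:ℕ) := Nat.pos_of_ne_zero hi
      rw [hbdef, hevdef]
      simp only [if_neg hi]
      exact Stmt9Aux.eig hnest (hMR i hi') (hiB i hi') (hBM i hi') (hBneM i hi')
        (hBRor i hi') (hBmax i hi') hT
  set P : Matrix (Fin n) (Fin n) ℚ := Matrix.of (fun r c => b c r) with hPdef
  have hAP : ∀ T ∈ R, AT n T * P = P * Matrix.diagonal (ev T) := by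
    intro T hT
    ext r c
    have h1 : (AT n T * P) r c = (AT n T *ᵥ b c) r := by
      simp [Matrix.mul_apply, Matrix.mulVec, dotProduct, hPdef]
    rw [h1, hev T hT c, Matrix.mul_diagonal]
    simp only [hPdef, Matrix.of_apply, Pi.smul_apply, smul_eq_mul]
    ring
  -- dot product lemmas
  have hdot_sub : ∀ i j : Fin n, 0 < (i:ℕ) → 0 < (j:ℕ) → M i ⊆ M j → M i ≠ M j → v i ⬝ᵥ v j = 0 := by
    intro i j hi hj hsub hne
    -- v j is constant on M i
    have halt : (∀ k ∈ M i, k ∈ B j) ∨ (∀ k ∈ M i, k ∉ B j) := by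
      by_cases hjMi : j ∈ M i
      · left
        exact fun k hk => hBmax j hj (M i) (hMR i hi) hsub hne hjMi hk
      · rcases hBRor j hj with h1 | h2
        · right
          intro k hk hkB
          rw [h1, Finset.mem_singleton] at hkB
          exact hjMi (hkB ▸ hk)
        · rcases hnest (M i) (hMR i hi) (B j) h2 with hd | hs | hs
          · right; exact fun k hk => Finset.disjoint_left.mp hd hk
          · left; exact fun k hk => hs hk
          · exact absurd (hs (hiB j hj)) hjMi
    rcases halt with hall | hnone
    all_goals simp only [hvdef]
    · exact Stmt9Aux.dot_eq_zero_of (S := M i) (a := ((M j).card : ℚ) - (B j).card)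
        (Stmt9Aux.vsupp (hBM i hi)) (Stmt9Aux.vsum (hBM i hi))
        (fun k hk => by rw [Stmt9Aux.vval (hBM j hj), if_pos (hall k hk)])
    · exact Stmt9Aux.dot_eq_zero_of (S := M i) (a := -((B j).card : ℚ))
        (Stmt9Aux.vsupp (hBM i hi)) (Stmt9Aux.vsum (hBM i hi))
        (fun k hk => by
          rw [Stmt9Aux.vval (hBM j hj), if_neg (hnone k hk), if_pos (hsub hk)])
  have hdot_zero : ∀ i j : Fin n, 0 < (i:ℕ) → 0 < (j:ℕ) → M i ≠ M j → v i ⬝ᵥ v j = 0 := by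
    intro i j hi hj hne
    rcases hnest (M i) (hMR i hi) (M j) (hMR j hj) with hd | hs | hs
    · simp only [hvdef]
      unfold dotProduct
      apply Finset.sum_eq_zero
      intro k _
      by_cases hk : k ∈ M i
      · rw [Stmt9Aux.vsupp (hBM j hj) k (Finset.disjoint_left.mp hd hk), mul_zero]
      · rw [Stmt9Aux.vsupp (hBM i hi) k hk, zero_mul]
    · exact hdot_sub i j hi hj hs hne
    · rw [dotProduct_comm]
      exact hdot_sub j i hj hi hs (fun h => hne h.symm)
  have hdot_same : ∀ i j : Fin n, 0 < (i:ℕ) → 0 < (j:ℕ) → i ≠ j → M i = M j →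
      v i ⬝ᵥ v j = -(((M j).card : ℚ) * (B i).card * (B j).card) := by
    intro i j hi hj hij hMeq
    simp only [hvdef]
    rw [Stmt9Aux.v_dot_v]
    rw [Finset.disjoint_iff_inter_eq_empty.mp (hBdisj i j hi hj hij hMeq)]
    rw [Finset.inter_eq_left.mpr (by rw [← hMeq]; exact hBM i hi)]
    rw [Finset.inter_eq_right.mpr (by rw [hMeq]; exact hBM j hj)]
    rw [hMeq, Finset.inter_self]
    simp
    ring
  have hdot_self : ∀ j : Fin n, 0 < (j:ℕ) →
      v j ⬝ᵥ v j = ((M j).card : ℚ) * (B j).card * (((M j).card : ℚ) - (B j).card) := by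
    intro j hj
    simp only [hvdef]
    rw [Stmt9Aux.v_dot_v]
    rw [Finset.inter_self, Finset.inter_eq_left.mpr (hBM j hj),
      Finset.inter_eq_right.mpr (hBM j hj), Finset.inter_self]
    ring
  -- invertibility of P
  have hdet : IsUnit P.det := by
    rw [isUnit_iff_ne_zero]
    intro hdet0
    obtain ⟨w, hw0, hwP⟩ := (Matrix.exists_mulVec_eq_zero_iff).mpr hdet0
    have hrel : ∀ r, ∑ i : Fin n, w i * b i r = 0 := by
      intro r
      have h := congrFun hwP r
      simp only [Matrix.mulVec, dotProduct, hPdef, Matrix.of_apply, Pi.zero_apply] at h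
      rw [← h]
      exact Finset.sum_congr rfl (fun i _ => mul_comm _ _)
    have hdotrel : ∀ u : Fin n → ℚ, ∑ i : Fin n, w i * (b i ⬝ᵥ u) = 0 := by
      intro u
      have : ∑ i : Fin n, w i * (b i ⬝ᵥ u) = ∑ r, (∑ i : Fin n, w i * b i r) * u r := by
        simp only [dotProduct, Finset.mul_sum, Finset.sum_mul]
        rw [Finset.sum_comm]
        exact Finset.sum_congr rfl (fun r _ => Finset.sum_congr rfl (fun i _ => by ring))
      rw [this]
      apply Finset.sum_eq_zero
      intro r _
      rw [hrel r, zero_mul]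
    -- all nonzero coordinates vanish
    have hwpos : ∀ j : Fin n, 0 < (j:ℕ) → w j = 0 := by
      intro j hj
      set I := Finset.univ.filter (fun i : Fin n => 0 < (i:ℕ) ∧ M i = M j) with hIdef
      have hjI : j ∈ I := by
        rw [hIdef, Finset.mem_filter]
        exact ⟨Finset.mem_univ _, hj, rfl⟩
      set Sv := ∑ i ∈ I, w i * ((B i).card : ℚ) with hSvdef
      set m := ((M j).card : ℚ) with hmdef
      have hm0 : m ≠ 0 := by
        rw [hmdef]
        exact_mod_cast Nat.pos_iff_ne_zero.mp (hMcardpos j hj)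
      -- key equation for each member of I
      have hkey : ∀ j', j' ∈ I → w j' * m = Sv := by
        intro j' hj'I
        rw [hIdef, Finset.mem_filter] at hj'I
        obtain ⟨-, hj', hMj'⟩ := hj'I
        have hsum0 := hdotrel (v j')
        have hzero : ∀ i ∈ Finset.univ, i ∉ I → w i * (b i ⬝ᵥ v j') = 0 := by
          intro i _ hiI
          rw [hIdef, Finset.mem_filter] at hiI
          push_neg at hiI
          by_cases hi : 0 < (i:ℕ)
          · have hne : M i ≠ M j := hiI (Finset.mem_univ i) hi
            rw [hbv i hi, hdot_zero i j' hi hj' (by rw [hMj']; exact hne), mul_zero]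
          · have hieq : (i:ℕ) = 0 := by omega
            rw [hbdef]
            simp only [hieq, if_pos]
            rw [Stmt9Aux.ones_dot_v (hBM j' hj'), mul_zero]
        have hsumI : ∑ i ∈ I, w i * (b i ⬝ᵥ v j') = 0 :=
          (Finset.sum_subset (Finset.subset_univ I) hzero).trans hsum0
        have hj'mem : j' ∈ I := by
          rw [hIdef, Finset.mem_filter]
          exact ⟨Finset.mem_univ _, hj', hMj'⟩
        rw [← Finset.add_sum_erase I (fun i => w i * (b i ⬝ᵥ v j')) hj'mem] at hsumI
        have hself : w j' * (b j' ⬝ᵥ v j') = w j' * (m * ((B j').card : ℚ) * (m - (B j').card)) := by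
          rw [hbv j' hj', hdot_self j' hj', hMj', hmdef]
        have hrest : ∑ i ∈ I.erase j', w i * (b i ⬝ᵥ v j')
            = -(m * ((B j').card : ℚ)) * (∑ i ∈ I.erase j', w i * ((B i).card : ℚ)) := by
          rw [Finset.mul_sum]
          refine Finset.sum_congr rfl (fun i hi => ?_)
          have hiI := Finset.mem_of_mem_erase hi
          rw [hIdef, Finset.mem_filter] at hiI
          obtain ⟨-, hipos, hMi⟩ := hiI
          have hine : i ≠ j' := Finset.ne_of_mem_erase hi
          rw [hbv i hipos, hdot_same i j' hipos hj' hine (by rw [hMi, hMj']), hMj', ← hmdef]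
          ring
        have hsplit : w j' * ((B j').card : ℚ) + ∑ i ∈ I.erase j', w i * ((B i).card : ℚ) = Sv := by
          rw [hSvdef]
          exact Finset.add_sum_erase I (fun i => w i * ((B i).card : ℚ)) hj'mem
        have hbj'0 : ((B j').card : ℚ) ≠ 0 :=
          by exact_mod_cast Nat.pos_iff_ne_zero.mp (hBcardpos j' hj')
        have hfin : m * ((B j').card : ℚ) * (w j' * m - Sv) = 0 := by
          rw [hself, hrest] at hsumI
          linear_combination hsumI + (m * ((B j').card : ℚ)) * hsplit
        rcases mul_eq_zero.mp hfin with h | h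
        · exact absurd h (mul_ne_zero hm0 hbj'0)
        · linarith [h]
      -- sum of block cards is at most m - 1
      have hdisjI : ∀ x ∈ I, ∀ y ∈ I, x ≠ y → Disjoint (B x) (B y) := by
        intro x hx y hy hxy
        rw [hIdef, Finset.mem_filter] at hx hy
        exact hBdisj x y hx.2.1 hy.2.1 hxy (by rw [hx.2.2, hy.2.2])
      have hmu := (M j).min'_mem ⟨j, hiM j hj⟩
      have hsubErase : I.biUnion B ⊆ (M j).erase ((M j).min' ⟨j, hiM j hj⟩) := by
        intro k hk
        rw [Finset.mem_biUnion] at hk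
        obtain ⟨i, hiI, hkB⟩ := hk
        rw [hIdef, Finset.mem_filter] at hiI
        obtain ⟨-, hipos, hMi⟩ := hiI
        rw [Finset.mem_erase]
        constructor
        · intro hkmu
          obtain ⟨j0, hj0M, hj0lt⟩ := hMlt i hipos
          have hle : (M j).min' ⟨j, hiM j hj⟩ ≤ j0 := Finset.min'_le _ _ (by rw [← hMi]; exact hj0M)
          have : k < i := lt_of_le_of_lt (hkmu ▸ hle) hj0lt
          exact hBge i hipos k hkB this
        · rw [← hMi]
          exact hBM i hipos hkB
      have hcardsum : ∑ i ∈ I, (B i).card ≤ (M j).card - 1 := by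
        rw [← Finset.card_biUnion hdisjI]
        calc (I.biUnion B).card ≤ ((M j).erase ((M j).min' ⟨j, hiM j hj⟩)).card :=
              Finset.card_le_card hsubErase
          _ = (M j).card - 1 := Finset.card_erase_of_mem hmu
      -- conclude Sv = 0
      have hSvm : Sv * m = Sv * (∑ i ∈ I, ((B i).card : ℚ)) := by
        rw [hSvdef, Finset.sum_mul, Finset.mul_sum]
        refine Finset.sum_congr rfl (fun i hi => ?_)
        have := hkey i hi
        calc w i * ((B i).card : ℚ) * m = (w i * m) * ((B i).card : ℚ) := by ring
          _ = Sv * ((B i).card : ℚ) := by rw [this]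
      have hlt : (∑ i ∈ I, ((B i).card : ℚ)) < m := by
        have h1 : ((∑ i ∈ I, (B i).card : ℕ) : ℚ) = ∑ i ∈ I, ((B i).card : ℚ) := by
          push_cast
          rfl
        rw [← h1, hmdef]
        have h2 : (∑ i ∈ I, (B i).card) < (M j).card := by
          have := hMcardpos j hj
          omega
        exact_mod_cast h2
      have hSv0 : Sv = 0 := by
        by_contra hSv
        have := mul_left_cancel₀ hSv (hSvm.symm)
        linarith
      have := hkey j hjI
      rw [hSv0] at this
      rcases mul_eq_zero.mp this with h | h
      · exact h
      · exact absurd h hm0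
    -- the zero coordinate
    have hw00 : w ⟨0, hn0⟩ = 0 := by
      have h := hrel ⟨0, hn0⟩
      rw [Finset.sum_eq_single (⟨0, hn0⟩ : Fin n)] at h
      · rw [hbdef] at h
        simpa using h
      · intro i _ hine
        have hipos : 0 < (i:ℕ) := by
          rcases Nat.eq_zero_or_pos (i:ℕ) with h0 | h0
          · exact absurd (Fin.ext h0) hine
          · exact h0
        rw [hwpos i hipos, zero_mul]
      · intro h
        exact absurd (Finset.mem_univ _) h
    apply hw0
    funext i
    rcases Nat.eq_zero_or_pos (i:ℕ) with h0 | h0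
    · have : i = ⟨0, hn0⟩ := Fin.ext h0
      rw [this]
      exact hw00
    · exact hwpos i h0
  refine ⟨P, (Matrix.isUnit_iff_isUnit_det P).mpr hdet, ?_⟩
  intro T hT
  rw [Matrix.mul_assoc, hAP T hT, ← Matrix.mul_assoc, Matrix.nonsing_inv_mul P hdet,
    Matrix.one_mul]
  exact Matrix.isDiag_diagonal _
end

section
/- Let R be a tree species on {1,…,n} and A = Σ_{T∈R} λ(T)·A(T) with rational coefficients λ(T). Then A is diagonalizable and its eigenvalues lie in the set {0} ∪ { Σ_{T ∈ R, T ⊇ T_1} λ(T)·n(T) : T_1 ∈ R }. -/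
open BigOperators Matrix

namespace Stmt10Aux

variable {n : ℕ}

/-- Averaged indicator vector. -/
noncomputable def uvec (S : Finset (Fin n)) : Fin n → ℚ :=
  fun i => if i ∈ S then ((S.card : ℚ))⁻¹ else 0

lemma AT_mulVec (T : Finset (Fin n)) (v : Fin n → ℚ) (i : Fin n) :
    (AT n T *ᵥ v) i = if i ∈ T then (T.card : ℚ) * v i - ∑ j ∈ T, v j else 0 := by
  classical
  simp only [mulVec, dotProduct, AT]
  by_cases hi : i ∈ T
  · simp only [hi, true_and, if_true]
    have h1 : ∀ j : Fin n,
        (if j ∈ T then (if i = j then (T.card : ℚ) - 1 else -1) else 0) * v j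
        = (if j ∈ T then (if i = j then (T.card : ℚ) * v j else 0) - v j else 0) := by
      intro j
      by_cases hj : j ∈ T
      · by_cases hij : i = j <;> simp [hj, hij] <;> ring
      · simp [hj]
    rw [Finset.sum_congr rfl fun j _ => h1 j]
    rw [Finset.sum_ite_mem, Finset.univ_inter, Finset.sum_sub_distrib,
      Finset.sum_ite_eq T i (fun j => (T.card : ℚ) * v j)]
    simp [hi]
  · simp [hi]

lemma sum_uvec (S : Finset (Fin n)) (hS : S.Nonempty) : ∑ j, uvec S j = 1 := by
  classical
  have hc : (S.card : ℚ) ≠ 0 := by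
    exact_mod_cast (Finset.card_pos.mpr hS).ne'
  simp only [uvec]
  rw [Finset.sum_ite_mem, Finset.univ_inter, Finset.sum_const, nsmul_eq_mul]
  field_simp

/-- The workhorse: a vector supported on `S₀ ∈ R`, with zero sum, constant on every
strict `R`-subset of `S₀`, is an eigenvector of the magic matrix. -/
lemma mulVec_good (R : Finset (Finset (Fin n)))
    (hnest : ∀ T1 ∈ R, ∀ T2 ∈ R, Disjoint T1 T2 ∨ T1 ⊆ T2 ∨ T2 ⊆ T1)
    (lam : Finset (Fin n) → ℚ) (S₀ : Finset (Fin n)) (hS₀ : S₀ ∈ R)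
    (w : Fin n → ℚ)
    (hsupp : ∀ i, i ∉ S₀ → w i = 0)
    (hsum : ∑ j, w j = 0)
    (hconst : ∀ T ∈ R, T ⊂ S₀ → ∀ j ∈ T, ∀ j' ∈ T, w j = w j') :
    (∑ T ∈ R, lam T • AT n T) *ᵥ w
      = (∑ T ∈ R.filter (fun T => S₀ ⊆ T), lam T * T.card) • w := by
  classical
  funext i
  have hterm : ∀ T ∈ R, (lam T • AT n T *ᵥ w) i
      = if S₀ ⊆ T then (lam T * T.card) * w i else 0 := by
    intro T hT
    have hAT := AT_mulVec T w i
    have hsmul : (lam T • AT n T *ᵥ w) i = lam T * (AT n T *ᵥ w) i := by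
      simp [Matrix.smul_mulVec]
    rw [hsmul, hAT]
    by_cases hST : S₀ ⊆ T
    · -- sum over T of w is total sum = 0
      have hsumT : ∑ j ∈ T, w j = 0 := by
        have h2 : ∑ j ∈ T, w j = ∑ j, w j :=
          Finset.sum_subset (Finset.subset_univ T)
            (fun j _ hj => hsupp j (fun h => hj (hST h)))
        rw [h2, hsum]
      by_cases hi : i ∈ T
      · simp [hi, hST, hsumT]; ring
      · have : w i = 0 := hsupp i (fun h => hi (hST h))
        simp [hi, hST, this]
    · rcases hnest T hT S₀ hS₀ with hdisj | hsub | hsub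
      · -- T disjoint from S₀
        have hz : ∀ j ∈ T, w j = 0 := fun j hj =>
          hsupp j (fun h => (Finset.disjoint_left.mp hdisj hj) h)
        have hzs : ∑ j ∈ T, w j = 0 := Finset.sum_eq_zero hz
        by_cases hi : i ∈ T
        · simp [hi, hST, hz i hi, hzs]
        · simp [hi, hST]
      · -- T ⊆ S₀, hence T ⊂ S₀
        have hTs : T ⊂ S₀ := ssubset_of_subset_of_ne hsub (by rintro rfl; exact hST (le_refl _))
        by_cases hi : i ∈ T
        · have : ∑ j ∈ T, w j = T.card * w i := by
            rw [Finset.sum_congr rfl (fun j hj => hconst T hT hTs j hj i hi)]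
            simp [Finset.sum_const, mul_comm]
          simp [hi, hST, this]
        · simp [hi, hST]
      · exact absurd hsub hST
  have hswap : ((∑ T ∈ R, lam T • AT n T) *ᵥ w) i = ∑ T ∈ R, (lam T • AT n T *ᵥ w) i := by
    simp only [mulVec, dotProduct, Matrix.sum_apply, Finset.sum_mul]
    rw [Finset.sum_comm]
    refine Finset.sum_congr rfl fun T _ => ?_
    simp [mulVec, dotProduct, Finset.mul_sum, mul_assoc]
  rw [hswap, Finset.sum_congr rfl hterm, Finset.sum_ite, Finset.sum_const_zero, add_zero,
    ← Finset.sum_mul]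
  simp


variable (R : Finset (Finset (Fin n)))

lemma exists_min_mem
    (hnest : ∀ T1 ∈ R, ∀ T2 ∈ R, Disjoint T1 T2 ∨ T1 ⊆ T2 ∨ T2 ⊆ T1)
    (huniv : Finset.univ ∈ R) (i : Fin n) :
    ∃ T0 ∈ R, i ∈ T0 ∧ ∀ T ∈ R, i ∈ T → T0 ⊆ T := by
  classical
  have hne : (R.filter (fun T => i ∈ T)).Nonempty :=
    ⟨Finset.univ, Finset.mem_filter.mpr ⟨huniv, Finset.mem_univ i⟩⟩
  obtain ⟨T0, hT0, hmin⟩ := Finset.exists_min_image _ Finset.card hne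
  rw [Finset.mem_filter] at hT0
  refine ⟨T0, hT0.1, hT0.2, fun T hT hiT => ?_⟩
  rcases hnest T0 hT0.1 T hT with hd | h | h
  · exact absurd (Finset.mem_inter.mpr ⟨hT0.2, hiT⟩)
      (by simp [Finset.disjoint_left.mp hd hT0.2, hiT])
  · exact h
  · have := hmin T (Finset.mem_filter.mpr ⟨hT, hiT⟩)
    have heq : T = T0 := Finset.eq_of_subset_of_card_le h this
    exact heq ▸ h

lemma exists_parent
    (hnest : ∀ T1 ∈ R, ∀ T2 ∈ R, Disjoint T1 T2 ∨ T1 ⊆ T2 ∨ T2 ⊆ T1)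
    (huniv : Finset.univ ∈ R) (T : Finset (Fin n)) (hT : T ∈ R)
    (hTne : T.Nonempty) (hne : T ≠ Finset.univ) :
    ∃ P0 ∈ R, T ⊂ P0 ∧ ∀ S ∈ R, T ⊂ S → P0 ⊆ S := by
  classical
  have hne2 : (R.filter (fun S => T ⊂ S)).Nonempty :=
    ⟨Finset.univ, Finset.mem_filter.mpr ⟨huniv,
      Finset.ssubset_univ_iff.mpr hne⟩⟩
  obtain ⟨P0, hP0, hmin⟩ := Finset.exists_min_image _ Finset.card hne2
  rw [Finset.mem_filter] at hP0
  refine ⟨P0, hP0.1, hP0.2, fun S hS hTS => ?_⟩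
  obtain ⟨x, hx⟩ := hTne
  rcases hnest P0 hP0.1 S hS with hd | h | h
  · exact absurd (Finset.disjoint_left.mp hd (hP0.2.subset hx)) (by simp [hTS.subset hx])
  · exact h
  · have := hmin S (Finset.mem_filter.mpr ⟨hS, hTS⟩)
    have heq : S = P0 := Finset.eq_of_subset_of_card_le h this
    exact heq ▸ h

lemma mulVec_ones (lam : Finset (Fin n) → ℚ) (hc : ∀ T ∈ R, 2 ≤ T.card) :
    (∑ T ∈ R, lam T • AT n T) *ᵥ (fun _ => (1 : ℚ)) = (0 : ℚ) • (fun _ => (1 : ℚ)) := by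
  classical
  funext i
  have hswap : ((∑ T ∈ R, lam T • AT n T) *ᵥ (fun _ => (1:ℚ))) i
      = ∑ T ∈ R, (lam T • AT n T *ᵥ (fun _ => (1:ℚ))) i := by
    simp only [mulVec, dotProduct, Matrix.sum_apply, Finset.sum_mul]
    rw [Finset.sum_comm]
    refine Finset.sum_congr rfl fun T _ => ?_
    simp [mulVec, dotProduct, Finset.mul_sum, mul_assoc]
  rw [hswap]
  refine (Finset.sum_eq_zero fun T hT => ?_).trans (by simp)
  have hAT := AT_mulVec T (fun _ => (1:ℚ)) i
  have hsmul : (lam T • AT n T *ᵥ (fun _ => (1:ℚ))) i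
      = lam T * (AT n T *ᵥ (fun _ => (1:ℚ))) i := by
    simp [Matrix.smul_mulVec]
  rw [hsmul, hAT]
  by_cases hi : i ∈ T <;> simp [hi]


lemma eigen_y
    (hnest : ∀ T1 ∈ R, ∀ T2 ∈ R, Disjoint T1 T2 ∨ T1 ⊆ T2 ∨ T2 ⊆ T1)
    (lam : Finset (Fin n) → ℚ) (i : Fin n) (T0 : Finset (Fin n)) (hT0 : T0 ∈ R)
    (hiT0 : i ∈ T0) (hminT0 : ∀ T ∈ R, i ∈ T → T0 ⊆ T) :
    (∑ T ∈ R, lam T • AT n T) *ᵥ (Pi.single i 1 - uvec T0)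
      = (∑ T ∈ R.filter (fun T => T0 ⊆ T), lam T * T.card) • (Pi.single i 1 - uvec T0) := by
  classical
  refine mulVec_good R hnest lam T0 hT0 _ ?_ ?_ ?_
  · intro j hj
    have hji : j ≠ i := fun h => hj (h ▸ hiT0)
    simp [Pi.single_apply, hji.symm, uvec, hj]
  · have h1 : ∑ j, (Pi.single i 1 : Fin n → ℚ) j = 1 := by
      simp [Pi.single_apply]
    have h2 := sum_uvec T0 ⟨i, hiT0⟩
    simp only [Pi.sub_apply, Finset.sum_sub_distrib, h1, h2, sub_self]
  · intro T hT hTsub j hj j' hj'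
    have hiT : i ∉ T := fun hi =>
      (hTsub.not_subset) (hminT0 T hT hi)
    have hji : j ≠ i := fun h => hiT (h ▸ hj)
    have hji' : j' ≠ i := fun h => hiT (h ▸ hj')
    have hjT0 : j ∈ T0 := hTsub.subset hj
    have hj'T0 : j' ∈ T0 := hTsub.subset hj'
    simp [Pi.single_apply, hji.symm, hji'.symm, uvec, hjT0, hj'T0]

lemma eigen_x
    (hnest : ∀ T1 ∈ R, ∀ T2 ∈ R, Disjoint T1 T2 ∨ T1 ⊆ T2 ∨ T2 ⊆ T1)
    (lam : Finset (Fin n) → ℚ) (T P0 : Finset (Fin n)) (hT : T ∈ R) (hTne : T.Nonempty)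
    (hP0 : P0 ∈ R) (hTP0 : T ⊂ P0) (hminP0 : ∀ S ∈ R, T ⊂ S → P0 ⊆ S) :
    (∑ S ∈ R, lam S • AT n S) *ᵥ (uvec T - uvec P0)
      = (∑ S ∈ R.filter (fun S => P0 ⊆ S), lam S * S.card) • (uvec T - uvec P0) := by
  classical
  refine mulVec_good R hnest lam P0 hP0 _ ?_ ?_ ?_
  · intro j hj
    have hjT : j ∉ T := fun h => hj (hTP0.subset h)
    simp [uvec, hj, hjT]
  · have h1 := sum_uvec T hTne
    have h2 := sum_uvec P0 ⟨hTne.choose, hTP0.subset hTne.choose_spec⟩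
    simp only [Pi.sub_apply, Finset.sum_sub_distrib, h1, h2, sub_self]
  · intro S hS hSsub j hj j' hj'
    have hjP : j ∈ P0 := hSsub.subset hj
    have hj'P : j' ∈ P0 := hSsub.subset hj'
    have huP : uvec P0 j = uvec P0 j' := by simp [uvec, hjP, hj'P]
    have huT : uvec T j = uvec T j' := by
      rcases hnest S hS T hT with hd | h | h
      · have hjT : j ∉ T := fun hx => (Finset.disjoint_left.mp hd hj) hx
        have hj'T : j' ∉ T := fun hx => (Finset.disjoint_left.mp hd hj') hx
        simp [uvec, hjT, hj'T]
      · simp [uvec, h hj, h hj']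
      · by_cases heq : T = S
        · subst heq; simp [uvec, hj, hj']
        · have : T ⊂ S := ssubset_of_subset_of_ne h heq
          exact absurd (hminP0 S hS this) hSsub.not_subset
    simp only [Pi.sub_apply, huP, huT]

end Stmt10Aux


/-- An element `A = ∑_{T ∈ R} λ(T)·A(T)` of the magic algebra of a tree species `R` is
diagonalizable, and its eigenvalues lie in `{0} ∪ {∑_{T ⊇ T₁} λ(T)·|T| : T₁ ∈ R}`. -/
theorem stmt10 (n : ℕ) (R : Finset (Finset (Fin n)))
    (huniv : Finset.univ ∈ R)
    (hcard : ∀ T ∈ R, 2 ≤ T.card)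
    (hnest : ∀ T1 ∈ R, ∀ T2 ∈ R, Disjoint T1 T2 ∨ T1 ⊆ T2 ∨ T2 ⊆ T1)
    (lam : Finset (Fin n) → ℚ) :
    (∃ P : Matrix (Fin n) (Fin n) ℚ, IsUnit P ∧
        (P⁻¹ * (∑ T ∈ R, lam T • AT n T) * P).IsDiag) ∧
    (∀ c : ℚ, Module.End.HasEigenvalue (∑ T ∈ R, lam T • AT n T).mulVecLin c →
      c = 0 ∨ ∃ T1 ∈ R, c = ∑ T ∈ R.filter (fun T => T1 ⊆ T), lam T * T.card) := by
  classical
  set A : Matrix (Fin n) (Fin n) ℚ := ∑ T ∈ R, lam T • AT n T with hA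
  set cval : Finset (Fin n) → ℚ :=
    fun T1 => ∑ T ∈ R.filter (fun T => T1 ⊆ T), lam T * T.card with hcval
  set s : Set (Fin n → ℚ) :=
    {w | ∃ μ : ℚ, (μ = 0 ∨ ∃ T1 ∈ R, μ = cval T1) ∧ A *ᵥ w = μ • w} with hs
  have hones : (fun _ => (1:ℚ)) ∈ s :=
    ⟨0, Or.inl rfl, Stmt10Aux.mulVec_ones R lam hcard⟩
  have hn0 : 0 < n := by
    have h2 := hcard Finset.univ huniv
    have h3 : (Finset.univ : Finset (Fin n)).card = n := by simp
    omega
  have hu_univ : Stmt10Aux.uvec (Finset.univ : Finset (Fin n)) ∈ Submodule.span ℚ s := by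
    have heq : Stmt10Aux.uvec (Finset.univ : Finset (Fin n))
        = (n : ℚ)⁻¹ • (fun _ => (1:ℚ)) := by
      funext i
      simp [Stmt10Aux.uvec, Finset.card_univ]
    rw [heq]
    exact Submodule.smul_mem _ _ (Submodule.subset_span hones)
  have huv : ∀ T ∈ R, Stmt10Aux.uvec T ∈ Submodule.span ℚ s := by
    have key : ∀ m : ℕ, ∀ T ∈ R, n ≤ T.card + m →
        Stmt10Aux.uvec T ∈ Submodule.span ℚ s := by
      intro m
      induction m with
      | zero =>
        intro T hT hle
        have hTcard : T.card = n := by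
          have := Finset.card_le_univ T
          simp [Finset.card_univ] at this
          omega
        have : T = Finset.univ := Finset.eq_univ_of_card T (by simpa using hTcard)
        rw [this]; exact hu_univ
      | succ m ih =>
        intro T hT hle
        by_cases hTu : T = Finset.univ
        · rw [hTu]; exact hu_univ
        · have hTne : T.Nonempty := Finset.card_pos.mp (by have := hcard T hT; omega)
          obtain ⟨P0, hP0R, hTP0, hminP0⟩ :=
            Stmt10Aux.exists_parent R hnest huniv T hT hTne hTu
          have hxs : Stmt10Aux.uvec T - Stmt10Aux.uvec P0 ∈ s :=
            ⟨cval P0, Or.inr ⟨P0, hP0R, rfl⟩,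
              Stmt10Aux.eigen_x R hnest lam T P0 hT hTne hP0R hTP0 hminP0⟩
          have hcardlt : T.card < P0.card := Finset.card_lt_card hTP0
          have heq : Stmt10Aux.uvec T
              = (Stmt10Aux.uvec T - Stmt10Aux.uvec P0) + Stmt10Aux.uvec P0 := by
            ring
          rw [heq]
          exact Submodule.add_mem _ (Submodule.subset_span hxs)
            (ih P0 hP0R (by omega))
    intro T hT
    exact key n T hT (by omega)
  have hstd : ∀ i : Fin n, (Pi.single i (1:ℚ) : Fin n → ℚ) ∈ Submodule.span ℚ s := by
    intro i
    obtain ⟨T0, hT0, hiT0, hmin⟩ := Stmt10Aux.exists_min_mem R hnest huniv i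
    have hys : (Pi.single i (1:ℚ) : Fin n → ℚ) - Stmt10Aux.uvec T0 ∈ s :=
      ⟨cval T0, Or.inr ⟨T0, hT0, rfl⟩,
        Stmt10Aux.eigen_y R hnest lam i T0 hT0 hiT0 hmin⟩
    have heq : (Pi.single i (1:ℚ) : Fin n → ℚ)
        = ((Pi.single i (1:ℚ) : Fin n → ℚ) - Stmt10Aux.uvec T0) + Stmt10Aux.uvec T0 := by
      ring
    rw [heq]
    exact Submodule.add_mem _ (Submodule.subset_span hys) (huv T0 hT0)
  have hspan : Submodule.span ℚ s = ⊤ := by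
    rw [eq_top_iff]
    intro v _
    have hv : v = ∑ i, v i • (Pi.single i (1:ℚ) : Fin n → ℚ) := by
      funext j
      simp [Pi.single_apply]
    rw [hv]
    exact Submodule.sum_mem _ fun i _ => Submodule.smul_mem _ _ (hstd i)
  obtain ⟨b, hbs, hbspan, hbli⟩ := exists_linearIndependent ℚ s
  have hbtop : ⊤ ≤ Submodule.span ℚ (Set.range ((↑) : b → (Fin n → ℚ))) := by
    rw [Subtype.range_coe, hbspan, hspan]
  let β0 : Module.Basis b ℚ (Fin n → ℚ) := Module.Basis.mk hbli hbtop
  haveI : Fintype b := hbli.setFinite.fintype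
  have hcardb : Fintype.card b = n := by
    have h1 := Module.finrank_eq_card_basis β0
    rw [Module.finrank_pi ℚ, Fintype.card_fin] at h1
    omega
  let e : b ≃ Fin n := Fintype.equivFinOfCardEq hcardb
  let β : Module.Basis (Fin n) ℚ (Fin n → ℚ) := β0.reindex e
  have hβ : ∀ k, (β k) ∈ s := by
    intro k
    have : β k = ((e.symm k : b) : Fin n → ℚ) := by
      simp [β, β0, Module.Basis.reindex_apply, Module.Basis.mk_apply]
    rw [this]
    exact hbs (e.symm k).2
  choose μ hμ using hβ
  have hμ0 : ∀ k, μ k = 0 ∨ ∃ T1 ∈ R, μ k = cval T1 := fun k => (hμ k).1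
  have hμeig : ∀ k, A *ᵥ β k = μ k • β k := fun k => (hμ k).2
  set P : Matrix (Fin n) (Fin n) ℚ := Matrix.of fun i k => β k i with hP
  have hPdef : P = (Pi.basisFun ℚ (Fin n)).toMatrix β := by
    ext i k
    simp [hP, Module.Basis.toMatrix_apply, Pi.basisFun_repr]
  haveI : Invertible ((Pi.basisFun ℚ (Fin n)).toMatrix β) :=
    (Pi.basisFun ℚ (Fin n)).invertibleToMatrix β
  have hPunit : IsUnit P := by
    rw [hPdef]; exact isUnit_of_invertible _
  have hAP : A * P = P * Matrix.diagonal μ := by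
    ext i k
    have h1 : (A * P) i k = (A *ᵥ β k) i := by
      simp [Matrix.mul_apply, Matrix.mulVec, dotProduct, hP]
    rw [Matrix.mul_diagonal, h1, hμeig k]
    simp [hP, mul_comm]
  have hPinv : P⁻¹ * P = 1 :=
    Matrix.nonsing_inv_mul P ((Matrix.isUnit_iff_isUnit_det P).mp hPunit)
  constructor
  · refine ⟨P, hPunit, ?_⟩
    have : P⁻¹ * A * P = Matrix.diagonal μ := by
      rw [Matrix.mul_assoc, hAP, ← Matrix.mul_assoc, hPinv, Matrix.one_mul]
    rw [this]
    exact Matrix.isDiag_diagonal μ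
  · intro c hc
    obtain ⟨v, hv⟩ := hc.exists_hasEigenvector
    have hv1 : A *ᵥ v = c • v := by
      have := hv.apply_eq_smul
      simpa [Matrix.mulVecLin_apply] using this
    have hvne : v ≠ 0 := hv.right
    obtain ⟨k0, hk0⟩ : ∃ k, β.repr v k ≠ 0 := by
      by_contra h
      push_neg at h
      apply hvne
      have hr0 : β.repr v = 0 := DFunLike.ext _ _ (by simpa using h)
      have := congrArg β.repr.symm hr0
      simpa using this
    have hsumv : v = ∑ j, β.repr v j • β j := (β.sum_repr v).symm
    have hAv : A *ᵥ v = ∑ j, (β.repr v j * μ j) • β j := by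
      conv_lhs => rw [hsumv]
      have h2 : A *ᵥ (∑ j, β.repr v j • β j)
          = ∑ j, β.repr v j • (A *ᵥ β j) := by
        rw [show ∀ x, A *ᵥ x = A.mulVecLin x from fun _ => rfl]
        rw [map_sum]
        exact Finset.sum_congr rfl fun j _ => by rw [LinearMap.map_smul, Matrix.mulVecLin_apply]
      rw [h2]
      exact Finset.sum_congr rfl fun j _ => by rw [hμeig j, smul_smul]
    have hcv : c • v = ∑ j, (c * β.repr v j) • β j := by
      conv_lhs => rw [hsumv]
      rw [Finset.smul_sum]
      exact Finset.sum_congr rfl fun j _ => by rw [smul_smul]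
    have h3 : (fun j => β.repr v j * μ j) = (fun j => c * β.repr v j) := by
      have h2 : ∑ j, (β.repr v j * μ j) • β j = ∑ j, (c * β.repr v j) • β j := by
        rw [← hAv, ← hcv, hv1]
      have h4 : ⇑(β.repr (∑ j, (β.repr v j * μ j) • β j))
          = ⇑(β.repr (∑ j, (c * β.repr v j) • β j)) := by rw [h2]
      rw [Module.Basis.repr_sum_self, Module.Basis.repr_sum_self] at h4
      exact h4
    have hck : μ k0 = c := by
      have h5 := congrFun h3 k0
      have h6 : β.repr v k0 * μ k0 = β.repr v k0 * c := h5.trans (mul_comm c _)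
      exact mul_left_cancel₀ hk0 h6
    rcases hμ0 k0 with h | ⟨T1, hT1, hT1e⟩
    · left; rw [← hck, h]
    · right; exact ⟨T1, hT1, by rw [← hck, hT1e]⟩
end

section
/- Every symmetric rational magic matrix A satisfying the exceptional property admits a decomposition A = s(A)·I + Σ_{T ∈ R} γ(T)·A(T) for some tree (R, γ) with γ(T_0) = inf{−α_{i,j} : i ≠ j}. -/
open BigOperators Matrix

namespace S12

-- helpers about Finset.max/min with unbot'
lemma max_unbot'_eq {s : Finset ℚ} {a : ℚ} (ha : a ∈ s) (h : ∀ b ∈ s, b ≤ a) :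
    s.max.unbotD 0 = a := by
  have hne : s.Nonempty := ⟨a, ha⟩
  have h1 : s.max = (s.max' hne : WithBot ℚ) := (Finset.coe_max' hne).symm
  have h2 : s.max' hne = a :=
    le_antisymm (Finset.max'_le _ _ _ h) (Finset.le_max' _ _ ha)
  rw [h1, h2]; rfl

lemma le_max_unbot' {s : Finset ℚ} {b : ℚ} (hb : b ∈ s) : b ≤ s.max.unbotD 0 := by
  have hne : s.Nonempty := ⟨b, hb⟩
  have h1 : s.max = (s.max' hne : WithBot ℚ) := (Finset.coe_max' hne).symm
  rw [h1]
  exact Finset.le_max' _ _ hb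

lemma max_unbot'_mem {s : Finset ℚ} (hs : s.Nonempty) : s.max.unbotD 0 ∈ s := by
  have h1 : s.max = (s.max' hs : WithBot ℚ) := (Finset.coe_max' hs).symm
  rw [h1]
  exact Finset.max'_mem s hs

lemma min_untop'_mem {s : Finset ℚ} (hs : s.Nonempty) : s.min.untopD 0 ∈ s := by
  have h1 : s.min = (s.min' hs : WithBot ℚ) := (Finset.coe_min' hs).symm
  rw [h1]
  exact Finset.min'_mem s hs

lemma min_untop'_eq {s : Finset ℚ} (hs : s.Nonempty) : s.min.untopD 0 = s.min' hs := by
  have h1 : s.min = (s.min' hs : WithBot ℚ) := (Finset.coe_min' hs).symm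
  rw [h1]; rfl

/-- Telescoping sum over a finite set of rationals. -/
lemma tele (V : Finset ℚ) (hV : V.Nonempty) :
    ∑ v ∈ V, (((V.filter fun w => v < w).min.untopD 0) - v) = - V.min' hV := by
  induction V using Finset.strongInduction with
  | _ V ih =>
    have hm0V : V.min' hV ∈ V := Finset.min'_mem V hV
    set m0 := V.min' hV with hm0
    by_cases hE : (V.erase m0).Nonempty
    · have hsub : V.erase m0 ⊂ V := Finset.erase_ssubset hm0V
      have ihE := ih _ hsub hE
      have hfil : ∀ v ∈ V.erase m0,
          V.filter (fun w => v < w) = (V.erase m0).filter (fun w => v < w) := by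
        intro v hv
        ext w
        simp only [Finset.mem_filter, Finset.mem_erase]
        constructor
        · rintro ⟨hwV, hvw⟩
          refine ⟨⟨?_, hwV⟩, hvw⟩
          rintro rfl
          exact absurd hvw (not_lt.mpr (Finset.min'_le V v (Finset.mem_of_mem_erase hv)))
        · rintro ⟨⟨_, hwV⟩, hvw⟩; exact ⟨hwV, hvw⟩
      have hfil0 : V.filter (fun w => m0 < w) = V.erase m0 := by
        ext w
        simp only [Finset.mem_filter, Finset.mem_erase]
        constructor
        · rintro ⟨hwV, hw⟩; exact ⟨ne_of_gt hw, hwV⟩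
        · rintro ⟨hne, hwV⟩
          exact ⟨hwV, lt_of_le_of_ne (Finset.min'_le V w hwV) (Ne.symm hne)⟩
      have hsum := Finset.add_sum_erase V
        (fun v => ((V.filter fun w => v < w).min.untopD 0) - v) hm0V
      rw [← hsum]
      have hcong : ∑ v ∈ V.erase m0, (((V.filter fun w => v < w).min.untopD 0) - v)
          = ∑ v ∈ V.erase m0, ((((V.erase m0).filter fun w => v < w).min.untopD 0) - v) :=
        Finset.sum_congr rfl (fun v hv => by rw [hfil v hv])
      rw [hcong, ihE]
      simp only [hfil0, min_untop'_eq hE]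
      ring
    · have hVs : V = {m0} := by
        have he : V.erase m0 = ∅ := Finset.not_nonempty_iff_eq_empty.mp hE
        apply Finset.eq_singleton_iff_unique_mem.mpr
        refine ⟨hm0V, fun x hx => ?_⟩
        by_contra hne
        exact (Finset.notMem_empty x) (he ▸ Finset.mem_erase.mpr ⟨hne, hx⟩)
      rw [hVs]
      rw [Finset.sum_singleton]
      have h0 : Finset.filter (fun w => m0 < w) ({m0} : Finset ℚ) = ∅ := by
        simp [Finset.filter_singleton]
      rw [h0]
      simp

variable {n : ℕ} (A : Matrix (Fin n) (Fin n) ℚ)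

def cl (v : ℚ) (i : Fin n) : Finset (Fin n) :=
  Finset.univ.filter (fun k => i = k ∨ A i k ≤ v)

def mval (T : Finset (Fin n)) : ℚ := (T.offDiag.image fun p => A p.1 p.2).max.unbotD 0

def Rset : Finset (Finset (Fin n)) :=
  ((Finset.univ : Finset (Fin n × Fin n)).filter fun p => p.1 ≠ p.2).image
    fun p => cl A (A p.1 p.2) p.1

def nextv (T : Finset (Fin n)) : ℚ :=
  (((Rset A).filter fun S => T ⊂ S).image (mval A)).min.untopD 0

def gam (T : Finset (Fin n)) : ℚ := nextv A T - mval A T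

lemma mem_cl {v : ℚ} {i k : Fin n} : k ∈ cl A v i ↔ (i = k ∨ A i k ≤ v) := by
  simp [cl]

lemma self_mem_cl {v : ℚ} {i : Fin n} : i ∈ cl A v i := (mem_cl A).mpr (Or.inl rfl)

lemma cl_mono {v w : ℚ} (h : v ≤ w) (i : Fin n) : cl A v i ⊆ cl A w i := by
  intro k hk
  rw [mem_cl] at hk ⊢
  exact hk.imp_right (fun h' => le_trans h' h)

variable (hsym : Aᵀ = A)
variable (hexc : ∀ i j k : Fin n, i ≠ j → j ≠ k → k ≠ i →
      ((A i j = A j k ∧ A k i ≤ A i j) ∨ (A j k = A k i ∧ A i j ≤ A j k) ∨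
        (A i j = A k i ∧ A j k ≤ A i j)))

include hsym in
lemma Asymm (i j : Fin n) : A j i = A i j := by
  rw [← Matrix.transpose_apply A i j, hsym]

include hsym hexc in
lemma rel_trans {v : ℚ} {i j k : Fin n} (hij : i = j ∨ A i j ≤ v)
    (hjk : j = k ∨ A j k ≤ v) : i = k ∨ A i k ≤ v := by
  rcases hij with rfl | hij
  · exact hjk
  rcases hjk with rfl | hjk
  · exact Or.inr hij
  by_cases hik : i = k
  · exact Or.inl hik
  right
  by_cases hij' : i = j
  · subst hij'; exact hjk
  by_cases hjk' : j = k
  · subst hjk'; exact hij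
  have h := hexc i j k hij' hjk' (fun h => hik h.symm)
  have hk : A k i ≤ v := by
    rcases h with ⟨_, h2⟩ | ⟨h1, _⟩ | ⟨h1, _⟩
    · exact le_trans h2 hij
    · rw [← h1]; exact hjk
    · rw [← h1]; exact hij
  rw [← Asymm A hsym i k]
  exact hk

include hsym in
lemma rel_symm {v : ℚ} {i j : Fin n} (h : i = j ∨ A i j ≤ v) : j = i ∨ A j i ≤ v := by
  rcases h with rfl | h
  · exact Or.inl rfl
  · rw [Asymm A hsym]; exact Or.inr h

include hsym hexc in
lemma cl_congr {v : ℚ} {i j : Fin n} (hj : j ∈ cl A v i) : cl A v j = cl A v i := by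
  rw [mem_cl] at hj
  ext k
  rw [mem_cl, mem_cl]
  constructor
  · intro hk
    exact rel_trans A hsym hexc hj hk
  · intro hk
    exact rel_trans A hsym hexc (rel_symm A hsym hj) hk

include hsym hexc in
lemma cl_pair_le {v : ℚ} {i a b : Fin n} (ha : a ∈ cl A v i) (hb : b ∈ cl A v i)
    (hab : a ≠ b) : A a b ≤ v := by
  rw [mem_cl] at ha hb
  exact (rel_trans A hsym hexc (rel_symm A hsym ha) hb).resolve_left hab

lemma le_mval {T : Finset (Fin n)} {a b : Fin n} (ha : a ∈ T) (hb : b ∈ T) (hab : a ≠ b) :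
    A a b ≤ mval A T := by
  apply le_max_unbot'
  exact Finset.mem_image.mpr ⟨(a, b), Finset.mem_offDiag.mpr ⟨ha, hb, hab⟩, rfl⟩

include hsym hexc in
lemma mval_cl {i j : Fin n} (hij : i ≠ j) : mval A (cl A (A i j) i) = A i j := by
  apply max_unbot'_eq
  · exact Finset.mem_image.mpr ⟨(i, j),
      Finset.mem_offDiag.mpr ⟨self_mem_cl A, (mem_cl A).mpr (Or.inr le_rfl), hij⟩, rfl⟩
  · rintro b hb
    obtain ⟨⟨a, b'⟩, hab, rfl⟩ := Finset.mem_image.mp hb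
    obtain ⟨ha, hb', hne⟩ := Finset.mem_offDiag.mp hab
    exact cl_pair_le A hsym hexc ha hb' hne

lemma mem_Rset {T : Finset (Fin n)} :
    T ∈ Rset A ↔ ∃ i j : Fin n, i ≠ j ∧ T = cl A (A i j) i := by
  constructor
  · intro h
    obtain ⟨p, hp, hT⟩ := Finset.mem_image.mp h
    exact ⟨p.1, p.2, (Finset.mem_filter.mp hp).2, hT.symm⟩
  · rintro ⟨i, j, hij, rfl⟩
    exact Finset.mem_image.mpr ⟨(i, j), Finset.mem_filter.mpr ⟨Finset.mem_univ _, hij⟩, rfl⟩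

include hsym hexc in
lemma cl_subset_of_mem {T : Finset (Fin n)} (hT : T ∈ Rset A) {i j : Fin n}
    (hi : i ∈ T) (hj : j ∈ T) (hij : i ≠ j) : cl A (A i j) i ⊆ T := by
  obtain ⟨k, l, hkl, rfl⟩ := (mem_Rset A).mp hT
  have hle : A i j ≤ A k l := cl_pair_le A hsym hexc hi hj hij
  calc cl A (A i j) i ⊆ cl A (A k l) i := cl_mono A hle i
    _ = cl A (A k l) k := cl_congr A hsym hexc hi

include hsym hexc in
lemma mval_mono_R {S T : Finset (Fin n)} (hS : S ∈ Rset A) (hT : T ∈ Rset A)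
    (h : S ⊆ T) : mval A S ≤ mval A T := by
  obtain ⟨i, j, hij, rfl⟩ := (mem_Rset A).mp hS
  rw [mval_cl A hsym hexc hij]
  exact le_mval A (h (self_mem_cl A)) (h ((mem_cl A).mpr (Or.inr le_rfl))) hij

include hsym hexc in
lemma mval_strict {S T : Finset (Fin n)} (hS : S ∈ Rset A) (hT : T ∈ Rset A)
    (h : S ⊂ T) : mval A S < mval A T := by
  obtain ⟨i, j, hij, rfl⟩ := (mem_Rset A).mp hS
  obtain ⟨x, hxT, hxS⟩ := Finset.exists_of_ssubset h
  have hxi : i ≠ x := fun he => hxS (he ▸ self_mem_cl A)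
  have h1 : A i j < A i x := by
    by_contra hle
    exact hxS ((mem_cl A).mpr (Or.inr (le_of_not_gt hle)))
  have h2 : A i x ≤ mval A T := le_mval A (h.subset (self_mem_cl A)) hxT hxi
  rw [mval_cl A hsym hexc hij]
  exact lt_of_lt_of_le h1 h2

include hsym hexc in
lemma laminar {S T : Finset (Fin n)} (hS : S ∈ Rset A) (hT : T ∈ Rset A) :
    Disjoint S T ∨ S ⊆ T ∨ T ⊆ S := by
  by_cases hd : Disjoint S T
  · exact Or.inl hd
  right
  obtain ⟨x, hxS, hxT⟩ := Finset.not_disjoint_iff.mp hd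
  obtain ⟨i, j, hij, rfl⟩ := (mem_Rset A).mp hS
  obtain ⟨k, l, hkl, rfl⟩ := (mem_Rset A).mp hT
  rcases le_total (A i j) (A k l) with hle | hle
  · left
    calc cl A (A i j) i = cl A (A i j) x := (cl_congr A hsym hexc hxS).symm
      _ ⊆ cl A (A k l) x := cl_mono A hle x
      _ = cl A (A k l) k := cl_congr A hsym hexc hxT
  · right
    calc cl A (A k l) k = cl A (A k l) x := (cl_congr A hsym hexc hxT).symm
      _ ⊆ cl A (A i j) x := cl_mono A hle x
      _ = cl A (A i j) i := cl_congr A hsym hexc hxS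

lemma card_two {T : Finset (Fin n)} (hT : T ∈ Rset A) : 2 ≤ T.card := by
  obtain ⟨i, j, hij, rfl⟩ := (mem_Rset A).mp hT
  exact Finset.one_lt_card.mpr ⟨i, self_mem_cl A, j, (mem_cl A).mpr (Or.inr le_rfl), hij⟩

lemma univ_mem (hn : 2 ≤ n) : Finset.univ ∈ Rset A := by
  have hne : (Finset.univ.offDiag : Finset (Fin n × Fin n)).Nonempty := by
    refine ⟨(⟨0, by omega⟩, ⟨1, by omega⟩),
      Finset.mem_offDiag.mpr ⟨Finset.mem_univ _, Finset.mem_univ _, ?_⟩⟩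
    simp [Fin.ext_iff]
  obtain ⟨p, hp, hmax⟩ := Finset.exists_max_image _ (fun p : Fin n × Fin n => A p.1 p.2) hne
  have hp12 : p.1 ≠ p.2 := (Finset.mem_offDiag.mp hp).2.2
  refine (mem_Rset A).mpr ⟨p.1, p.2, hp12, ?_⟩
  refine (Finset.eq_univ_iff_forall.mpr fun k => ?_).symm
  rw [mem_cl]
  by_cases hk : p.1 = k
  · exact Or.inl hk
  · exact Or.inr (hmax (p.1, k)
      (Finset.mem_offDiag.mpr ⟨Finset.mem_univ _, Finset.mem_univ _, hk⟩))

lemma mval_univ_attained (hn : 2 ≤ n) :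
    ∃ i j : Fin n, i ≠ j ∧ mval A Finset.univ = A i j := by
  have hne : (((Finset.univ : Finset (Fin n)).offDiag).image fun p => A p.1 p.2).Nonempty := by
    refine ⟨A ⟨0, by omega⟩ ⟨1, by omega⟩, Finset.mem_image.mpr
      ⟨(⟨0, by omega⟩, ⟨1, by omega⟩), Finset.mem_offDiag.mpr
        ⟨Finset.mem_univ _, Finset.mem_univ _, ?_⟩, rfl⟩⟩
    simp [Fin.ext_iff]
  obtain ⟨p, hp, he⟩ := Finset.mem_image.mp (max_unbot'_mem hne)
  exact ⟨p.1, p.2, (Finset.mem_offDiag.mp hp).2.2, he.symm⟩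

lemma nextv_univ : nextv A Finset.univ = 0 := by
  have h : (Rset A).filter (fun S => Finset.univ ⊂ S) = ∅ := by
    apply Finset.filter_eq_empty_iff.mpr
    intro S _ h
    exact h.ne (Finset.Subset.antisymm h.subset (Finset.subset_univ S))
  rw [nextv, h]
  rfl

lemma gam_univ : gam A Finset.univ = - mval A Finset.univ := by
  rw [gam, nextv_univ]
  ring

include hsym hexc in
lemma gam_pos (hn : 2 ≤ n) {T : Finset (Fin n)} (hT : T ∈ Rset A)
    (hTu : T ≠ Finset.univ) : 0 < gam A T := by
  have hu : Finset.univ ∈ (Rset A).filter (fun S => T ⊂ S) :=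
    Finset.mem_filter.mpr ⟨univ_mem A hn,
      Finset.ssubset_iff_subset_ne.mpr ⟨Finset.subset_univ T, hTu⟩⟩
  have hne : (((Rset A).filter fun S => T ⊂ S).image (mval A)).Nonempty :=
    ⟨_, Finset.mem_image_of_mem _ hu⟩
  obtain ⟨S, hS, hSe⟩ := Finset.mem_image.mp (min_untop'_mem hne)
  obtain ⟨hSR, hTS⟩ := Finset.mem_filter.mp hS
  have hlt : mval A T < mval A S := mval_strict A hsym hexc hT hSR hTS
  have : nextv A T = mval A S := hSe.symm
  rw [gam, this]
  exact sub_pos.mpr hlt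

include hsym hexc in
lemma offdiag_sum {i j : Fin n} (hij : i ≠ j) :
    ∑ T ∈ (Rset A).filter (fun T => i ∈ T ∧ j ∈ T), gam A T = - A i j := by
  classical
  set Rij := (Rset A).filter (fun T => i ∈ T ∧ j ∈ T) with hRij
  have hmemRij : ∀ T ∈ Rij, T ∈ Rset A ∧ i ∈ T ∧ j ∈ T := by
    intro T hT
    obtain ⟨h1, h2⟩ := Finset.mem_filter.mp hT
    exact ⟨h1, h2⟩
  have hCR : cl A (A i j) i ∈ Rset A := (mem_Rset A).mpr ⟨i, j, hij, rfl⟩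
  have hCij : cl A (A i j) i ∈ Rij :=
    Finset.mem_filter.mpr ⟨hCR, self_mem_cl A, (mem_cl A).mpr (Or.inr le_rfl)⟩
  have hmin : ∀ T ∈ Rij, cl A (A i j) i ⊆ T := by
    intro T hT
    obtain ⟨h1, h2, h3⟩ := hmemRij T hT
    exact cl_subset_of_mem A hsym hexc h1 h2 h3 hij
  have hnest : ∀ S ∈ Rij, ∀ T ∈ Rij, S ⊆ T ∨ T ⊆ S := by
    intro S hS T hT
    obtain ⟨hS1, hS2, _⟩ := hmemRij S hS
    obtain ⟨hT1, hT2, _⟩ := hmemRij T hT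
    rcases laminar A hsym hexc hS1 hT1 with hd | h | h
    · exact absurd hd (Finset.not_disjoint_iff.mpr ⟨i, hS2, hT2⟩)
    · exact Or.inl h
    · exact Or.inr h
  have hinj : ∀ S ∈ Rij, ∀ T ∈ Rij, mval A S = mval A T → S = T := by
    intro S hS T hT he
    by_contra hne
    rcases hnest S hS T hT with h | h
    · exact absurd he (ne_of_lt (mval_strict A hsym hexc (hmemRij S hS).1
        (hmemRij T hT).1 (Finset.ssubset_iff_subset_ne.mpr ⟨h, hne⟩)))
    · exact absurd he.symm (ne_of_lt (mval_strict A hsym hexc (hmemRij T hT).1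
        (hmemRij S hS).1 (Finset.ssubset_iff_subset_ne.mpr ⟨h, Ne.symm hne⟩)))
  have hVne : (Rij.image (mval A)).Nonempty := ⟨_, Finset.mem_image_of_mem _ hCij⟩
  have hnextv : ∀ T ∈ Rij, nextv A T
      = ((Rij.image (mval A)).filter fun w => mval A T < w).min.untopD 0 := by
    intro T hT
    obtain ⟨hTR, hiT, hjT⟩ := hmemRij T hT
    have hset : (Rset A).filter (fun S => T ⊂ S)
        = Rij.filter (fun S => mval A T < mval A S) := by
      ext S
      constructor
      · intro hS
        obtain ⟨hSR, hTS⟩ := Finset.mem_filter.mp hS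
        refine Finset.mem_filter.mpr ⟨Finset.mem_filter.mpr
          ⟨hSR, hTS.subset hiT, hTS.subset hjT⟩, mval_strict A hsym hexc hTR hSR hTS⟩
      · intro hS
        obtain ⟨hSij, hlt⟩ := Finset.mem_filter.mp hS
        obtain ⟨hSR, _, _⟩ := hmemRij S hSij
        refine Finset.mem_filter.mpr ⟨hSR, ?_⟩
        rcases hnest S hSij T hT with h | h
        · exact absurd (mval_mono_R A hsym hexc hSR hTR h) (not_le.mpr hlt)
        · refine Finset.ssubset_iff_subset_ne.mpr ⟨h, fun he => ?_⟩
          rw [he] at hlt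
          exact lt_irrefl _ hlt
    rw [nextv, hset]
    congr 1
    exact congrArg Finset.min (Finset.filter_image (p := fun w => mval A T < w)).symm
  have hsum1 : ∑ T ∈ Rij, gam A T = ∑ T ∈ Rij,
      (((Rij.image (mval A)).filter fun w => mval A T < w).min.untopD 0 - mval A T) :=
    Finset.sum_congr rfl (fun T hT => by rw [gam, hnextv T hT])
  have hsum2 : ∑ v ∈ Rij.image (mval A),
      (((Rij.image (mval A)).filter fun w => v < w).min.untopD 0 - v)
      = ∑ T ∈ Rij, (((Rij.image (mval A)).filter fun w => mval A T < w).min.untopD 0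
        - mval A T) := Finset.sum_image hinj
  have hmvC : mval A (cl A (A i j) i) = A i j := mval_cl A hsym hexc hij
  have h1 : (Rij.image (mval A)).min' hVne = A i j := by
    apply le_antisymm
    · exact Finset.min'_le _ _ (hmvC ▸ Finset.mem_image_of_mem (mval A) hCij)
    · apply Finset.le_min'
      intro y hy
      obtain ⟨T, hT, rfl⟩ := Finset.mem_image.mp hy
      rw [← hmvC]
      exact mval_mono_R A hsym hexc hCR (hmemRij T hT).1 (hmin T hT)
  rw [hsum1, ← hsum2, tele _ hVne, h1]

include hsym hexc in
lemma diag_sum (c : ℚ) (hrow : ∀ i, ∑ j, A i j = c) (i : Fin n) :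
    A i i = c + ∑ T ∈ (Rset A).filter (fun T => i ∈ T), gam A T * ((T.card : ℚ) - 1) := by
  classical
  have h1 : A i i + ∑ j ∈ Finset.univ.erase i, A i j = c := by
    rw [Finset.add_sum_erase _ _ (Finset.mem_univ i)]
    exact hrow i
  have h2 : ∑ j ∈ Finset.univ.erase i, A i j
      = - ∑ j ∈ Finset.univ.erase i, ∑ T ∈ (Rset A).filter (fun T => i ∈ T ∧ j ∈ T),
          gam A T := by
    rw [← Finset.sum_neg_distrib]
    refine Finset.sum_congr rfl fun j hj => ?_
    have hij : i ≠ j := fun h => (Finset.mem_erase.mp hj).1 h.symm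
    rw [offdiag_sum A hsym hexc hij, neg_neg]
  have h3 : ∀ j : Fin n, ∑ T ∈ (Rset A).filter (fun T => i ∈ T ∧ j ∈ T), gam A T
      = ∑ T ∈ (Rset A).filter (fun T => i ∈ T), (if j ∈ T then gam A T else 0) := by
    intro j
    rw [← Finset.sum_filter, Finset.filter_filter]
  have h4 : ∑ j ∈ Finset.univ.erase i, ∑ T ∈ (Rset A).filter (fun T => i ∈ T ∧ j ∈ T),
        gam A T
      = ∑ T ∈ (Rset A).filter (fun T => i ∈ T), gam A T * ((T.card : ℚ) - 1) := by
    rw [Finset.sum_congr rfl (fun j _ => h3 j), Finset.sum_comm]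
    refine Finset.sum_congr rfl fun T hT => ?_
    have hiT : i ∈ T := (Finset.mem_filter.mp hT).2
    have hfe : (Finset.univ.erase i).filter (fun j => j ∈ T) = T.erase i := by
      ext x
      simp only [Finset.mem_filter, Finset.mem_erase, Finset.mem_univ, true_and, and_comm]
    rw [← Finset.sum_filter, hfe, Finset.sum_const, nsmul_eq_mul,
      Finset.card_erase_of_mem hiT]
    have hc : 1 ≤ T.card := Finset.card_pos.mpr ⟨i, hiT⟩
    rw [Nat.cast_sub hc]
    push_cast
    ring
  rw [h2, h4] at h1
  linarith

end S12

/-- Every symmetric exceptional rational magic matrix `A` with sum `c` decomposes as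
`A = c·I + ∑_{T ∈ R} γ(T)·A(T)` for some tree `(R, γ)`, with
`γ(T₀) = inf{-A i j : i ≠ j}`. -/
theorem stmt12 (n : ℕ) (hn : 2 ≤ n) (A : Matrix (Fin n) (Fin n) ℚ) (c : ℚ)
    (hsym : Aᵀ = A) (hmagic : IsMagic A c)
    (hexc : ∀ i j k : Fin n, i ≠ j → j ≠ k → k ≠ i →
      ((A i j = A j k ∧ A k i ≤ A i j) ∨ (A j k = A k i ∧ A i j ≤ A j k) ∨
        (A i j = A k i ∧ A j k ≤ A i j))) :
    ∃ (R : Finset (Finset (Fin n))) (γ : Finset (Fin n) → ℚ),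
      Finset.univ ∈ R ∧
      (∀ T ∈ R, 2 ≤ T.card) ∧
      (∀ T1 ∈ R, ∀ T2 ∈ R, Disjoint T1 T2 ∨ T1 ⊆ T2 ∨ T2 ⊆ T1) ∧
      (∀ T ∈ R, T ≠ Finset.univ → 0 < γ T) ∧
      (∀ i j : Fin n, i ≠ j → γ Finset.univ ≤ -A i j) ∧
      (∃ i j : Fin n, i ≠ j ∧ γ Finset.univ = -A i j) ∧
      A = c • (1 : Matrix (Fin n) (Fin n) ℚ) + ∑ T ∈ R, γ T • AT n T := by
  classical
  refine ⟨S12.Rset A, S12.gam A, S12.univ_mem A hn, fun T hT => S12.card_two A hT,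
    fun T1 h1 T2 h2 => S12.laminar A hsym hexc h1 h2,
    fun T hT hTu => S12.gam_pos A hsym hexc hn hT hTu, ?_, ?_, ?_⟩
  · intro i j hij
    rw [S12.gam_univ]
    exact neg_le_neg (S12.le_mval A (Finset.mem_univ i) (Finset.mem_univ j) hij)
  · obtain ⟨i, j, hij, he⟩ := S12.mval_univ_attained A hn
    exact ⟨i, j, hij, by rw [S12.gam_univ, he]⟩
  · ext i j
    rw [Matrix.add_apply, Matrix.smul_apply, Matrix.one_apply, Matrix.sum_apply]
    by_cases hij : i = j
    · subst hij
      rw [if_pos rfl, smul_eq_mul, mul_one]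
      have hAT : ∀ T : Finset (Fin n), (S12.gam A T • AT n T) i i
          = if i ∈ T then S12.gam A T * ((T.card : ℚ) - 1) else 0 := by
        intro T
        rw [Matrix.smul_apply, smul_eq_mul]
        by_cases h : i ∈ T
        · simp [AT, h]
        · simp [AT, h]
      rw [Finset.sum_congr rfl (fun T _ => hAT T), ← Finset.sum_filter]
      exact S12.diag_sum A hsym hexc c hmagic.1 i
    · rw [if_neg hij, smul_eq_mul, mul_zero, zero_add]
      have hAT : ∀ T : Finset (Fin n), (S12.gam A T • AT n T) i j
          = if i ∈ T ∧ j ∈ T then -S12.gam A T else 0 := by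
        intro T
        rw [Matrix.smul_apply, smul_eq_mul]
        by_cases h : i ∈ T ∧ j ∈ T
        · simp [AT, h, hij]
        · simp [AT, h]
      rw [Finset.sum_congr rfl (fun T _ => hAT T), ← Finset.sum_filter,
        Finset.sum_neg_distrib, S12.offdiag_sum A hsym hexc hij, neg_neg]
end

section
/- For the generalized magic matrices A_μ(T): if T_1 ∩ T_2 = ∅ then A_μ(T_1)A_μ(T_2) = A_μ(T_2)A_μ(T_1) = 0, and if T_1 ⊆ T_2 then A_μ(T_1)A_μ(T_2) = A_μ(T_2)A_μ(T_1) = σ_μ(T_2)·A_μ(T_1), where σ_μ(T) = Σ_{i∈T} μ_i. -/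
open BigOperators Matrix

/-- The generalized elementary magic matrix `A_μ(T)`: entries `-μ i` for `i ≠ j` in `T`,
`∑_{k ∈ T, k ≠ i} μ k` on the diagonal for `i ∈ T`, and `0` elsewhere. -/
def ATmu (n : ℕ) (μ : Fin n → ℕ) (T : Finset (Fin n)) : Matrix (Fin n) (Fin n) ℚ :=
  fun i j => if i ∈ T ∧ j ∈ T then
      (if i = j then ∑ k ∈ T.erase i, (μ k : ℚ) else -(μ i : ℚ)) else 0

lemma ATmu_apply (n : ℕ) (μ : Fin n → ℕ) (T : Finset (Fin n)) {i j : Fin n}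
    (hi : i ∈ T) (hj : j ∈ T) :
    ATmu n μ T i j = (if i = j then ∑ k ∈ T, (μ k : ℚ) else 0) - (μ i : ℚ) := by
  simp only [ATmu, hi, hj, and_self, if_true]
  split
  · next h =>
    subst h
    rw [Finset.sum_erase_eq_sub hi]
  · ring

lemma ATmu_left (n : ℕ) (μ : Fin n → ℕ) (T : Finset (Fin n)) {i : Fin n} (j : Fin n)
    (hi : i ∉ T) : ATmu n μ T i j = 0 := by simp [ATmu, hi]

lemma ATmu_right (n : ℕ) (μ : Fin n → ℕ) (T : Finset (Fin n)) (i : Fin n) {j : Fin n}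
    (hj : j ∉ T) : ATmu n μ T i j = 0 := by simp [ATmu, hj]

lemma disj_mul (n : ℕ) (μ : Fin n → ℕ) (T1 T2 : Finset (Fin n)) (hd : Disjoint T1 T2) :
    ATmu n μ T1 * ATmu n μ T2 = 0 := by
  ext i j
  rw [Matrix.mul_apply, Matrix.zero_apply]
  apply Finset.sum_eq_zero
  intro k _
  by_cases hk : k ∈ T1
  · rw [ATmu_left n μ T2 j (Finset.disjoint_left.mp hd hk), mul_zero]
  · rw [ATmu_right n μ T1 i hk, zero_mul]

lemma sub_mul_left (n : ℕ) (μ : Fin n → ℕ) (T1 T2 : Finset (Fin n)) (hsub : T1 ⊆ T2) :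
    ATmu n μ T1 * ATmu n μ T2 = (∑ i ∈ T2, (μ i : ℚ)) • ATmu n μ T1 := by
  ext i j
  rw [Matrix.mul_apply, Matrix.smul_apply, smul_eq_mul]
  rw [← Finset.sum_subset T1.subset_univ
      (fun k _ hk => by rw [ATmu_right n μ T1 i hk, zero_mul])]
  by_cases hi : i ∈ T1
  · by_cases hj : j ∈ T2
    · rw [Finset.sum_congr rfl (fun k hk => by
        rw [ATmu_apply n μ T1 hi hk, ATmu_apply n μ T2 (hsub hk) hj])]
      by_cases hj1 : j ∈ T1
      · rw [ATmu_apply n μ T1 hi hj1]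
        simp only [sub_mul, mul_sub, Finset.sum_sub_distrib, ite_mul, mul_ite,
          zero_mul, mul_zero, Finset.sum_ite_eq, Finset.sum_ite_eq', hi, hj1,
          if_true, ← Finset.mul_sum]
        split_ifs <;> ring
      · rw [ATmu_right n μ T1 i hj1]
        simp only [sub_mul, mul_sub, Finset.sum_sub_distrib, ite_mul, mul_ite,
          zero_mul, mul_zero, Finset.sum_ite_eq, Finset.sum_ite_eq', hi, hj1,
          if_true, if_false, ← Finset.mul_sum]
        ring
    · rw [ATmu_right n μ T1 i (fun h => hj (hsub h)), mul_zero]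
      apply Finset.sum_eq_zero
      intro k hk
      rw [ATmu_right n μ T2 k hj, mul_zero]
  · rw [ATmu_left n μ T1 j hi, mul_zero]
    apply Finset.sum_eq_zero
    intro k _
    rw [ATmu_left n μ T1 k hi, zero_mul]

lemma sub_mul_right (n : ℕ) (μ : Fin n → ℕ) (T1 T2 : Finset (Fin n)) (hsub : T1 ⊆ T2) :
    ATmu n μ T2 * ATmu n μ T1 = (∑ i ∈ T2, (μ i : ℚ)) • ATmu n μ T1 := by
  ext i j
  rw [Matrix.mul_apply, Matrix.smul_apply, smul_eq_mul]
  rw [← Finset.sum_subset T1.subset_univ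
      (fun k _ hk => by rw [ATmu_left n μ T1 j hk, mul_zero])]
  by_cases hj : j ∈ T1
  · by_cases hi : i ∈ T2
    · rw [Finset.sum_congr rfl (fun k hk => by
        rw [ATmu_apply n μ T2 hi (hsub hk), ATmu_apply n μ T1 hk hj])]
      by_cases hi1 : i ∈ T1
      · rw [ATmu_apply n μ T1 hi1 hj]
        simp only [sub_mul, mul_sub, Finset.sum_sub_distrib, ite_mul, mul_ite,
          zero_mul, mul_zero, Finset.sum_ite_eq, Finset.sum_ite_eq', hi1, hj,
          if_true, ← Finset.mul_sum]
        split_ifs <;> ring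
      · rw [ATmu_left n μ T1 j hi1]
        simp only [sub_mul, mul_sub, Finset.sum_sub_distrib, ite_mul, mul_ite,
          zero_mul, mul_zero, Finset.sum_ite_eq, Finset.sum_ite_eq', hi1, hj,
          if_true, if_false, ← Finset.mul_sum]
        split_ifs with h
        · exact absurd (h ▸ hj) hi1
        · ring
    · rw [ATmu_left n μ T1 j (fun h => hi (hsub h)), mul_zero]
      apply Finset.sum_eq_zero
      intro k _
      rw [ATmu_left n μ T2 k hi, zero_mul]
  · rw [ATmu_right n μ T1 i hj, mul_zero]
    apply Finset.sum_eq_zero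
    intro k _
    rw [ATmu_right n μ T1 k hj, mul_zero]

/-- Products of generalized elementary magic matrices: they annihilate each other when
the subsets are disjoint, and
`A_μ(T1)·A_μ(T2) = A_μ(T2)·A_μ(T1) = σ_μ(T2)·A_μ(T1)` when `T1 ⊆ T2`,
where `σ_μ(T) = ∑_{i ∈ T} μ i`. -/
theorem stmt13 (n : ℕ) (μ : Fin n → ℕ) (hμ : ∀ i, 0 < μ i)
    (T1 T2 : Finset (Fin n)) (h1 : 2 ≤ T1.card) (h2 : 2 ≤ T2.card) :
    (Disjoint T1 T2 → ATmu n μ T1 * ATmu n μ T2 = 0 ∧ ATmu n μ T2 * ATmu n μ T1 = 0) ∧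
    (T1 ⊆ T2 →
      ATmu n μ T1 * ATmu n μ T2 = (∑ i ∈ T2, (μ i : ℚ)) • ATmu n μ T1 ∧
      ATmu n μ T2 * ATmu n μ T1 = (∑ i ∈ T2, (μ i : ℚ)) • ATmu n μ T1) := by
  refine ⟨fun hd => ⟨disj_mul n μ T1 T2 hd, disj_mul n μ T2 T1 hd.symm⟩,
    fun hsub => ⟨sub_mul_left n μ T1 T2 hsub, sub_mul_right n μ T1 T2 hsub⟩⟩
end

section
/- Let f = Π(y−a_i) be a reduced polynomial of degree n ≥ 2 over K̄ and w = Σ w_i ε_i ∈ F̄ (so Σ w_i = 0). If (u = Σ u_i ε_i, v) ∈ Ē × Ē solves u f'_x + v f'_y = w f, then v = Σ u_i a'_i ε_i and w_i = (Σ_{j≠i} (a'_i−a'_j)/(a_i−a_j)) u_i − Σ_{j≠i} ((a'_i−a'_j)/(a_i−a_j)) u_j for each i; equivalently, the column vector of the w_i equals the complete magic matrix 𝒜 applied to the column vector of the u_i. -/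
open BigOperators Polynomial

/-- `ε_i = ∏_{j ≠ i} (y - a j)`, the (unnormalized) Lagrange interpolation basis. -/
noncomputable def eps {K : Type*} [Field K] {n : ℕ} (a : Fin n → K) (i : Fin n) :
    Polynomial K :=
  ∏ j ∈ Finset.univ.erase i, (X - C (a j))

/-- The derivative `f'_x` of a polynomial in `y`, obtained by applying the derivation
`d` of the coefficient field coefficientwise. -/
noncomputable def Dx {K : Type*} [Field K] (d : K → K) (p : Polynomial K) :
    Polynomial K :=
  p.sum fun k c => C (d c) * X ^ k

section aux
variable {K : Type*} [Field K] {d : K → K}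

lemma d_zero (hd_add : ∀ x y, d (x + y) = d x + d y) : d 0 = 0 := by
  have h := hd_add 0 0
  simp only [add_zero] at h
  linear_combination -h

lemma d_one (hd_mul : ∀ x y, d (x * y) = d x * y + x * d y) : d 1 = 0 := by
  have h := hd_mul 1 1
  simp only [mul_one, one_mul] at h
  linear_combination -h

lemma d_neg (hd_add : ∀ x y, d (x + y) = d x + d y) (c : K) : d (-c) = -d c := by
  have h := hd_add c (-c)
  simp only [add_neg_cancel, d_zero hd_add] at h
  linear_combination -h

lemma Dx_monomial (hd_add : ∀ x y, d (x + y) = d x + d y) (k : ℕ) (c : K) :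
    Dx d (monomial k c) = C (d c) * X ^ k := by
  unfold Dx
  rw [Polynomial.sum_monomial_index]
  simp [d_zero hd_add]

lemma Dx_add (hd_add : ∀ x y, d (x + y) = d x + d y) (p q : Polynomial K) :
    Dx d (p + q) = Dx d p + Dx d q := by
  unfold Dx
  rw [Polynomial.sum_add_index]
  · intro i; simp [d_zero hd_add]
  · intro i b c; rw [hd_add]; rw [C_add, add_mul]

lemma Dx_mul (hd_add : ∀ x y, d (x + y) = d x + d y)
    (hd_mul : ∀ x y, d (x * y) = d x * y + x * d y) (p q : Polynomial K) :
    Dx d (p * q) = Dx d p * q + p * Dx d q := by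
  induction p using Polynomial.induction_on' with
  | add p1 p2 h1 h2 =>
    rw [add_mul, Dx_add hd_add, Dx_add hd_add, h1, h2]; ring
  | monomial k c =>
    induction q using Polynomial.induction_on' with
    | add q1 q2 h1 h2 =>
      rw [mul_add, Dx_add hd_add, Dx_add hd_add, h1, h2]; ring
    | monomial m b =>
      rw [monomial_mul_monomial, Dx_monomial hd_add, Dx_monomial hd_add,
        Dx_monomial hd_add, hd_mul, C_add, C_mul, C_mul,
        ← C_mul_X_pow_eq_monomial, ← C_mul_X_pow_eq_monomial]
      ring

lemma Dx_X_sub_C (hd_add : ∀ x y, d (x + y) = d x + d y)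
    (hd_mul : ∀ x y, d (x * y) = d x * y + x * d y) (c : K) :
    Dx d (X - C c) = - C (d c) := by
  have h : (X : Polynomial K) - C c = monomial 1 1 + monomial 0 (-c) := by
    rw [← C_mul_X_pow_eq_monomial, ← C_mul_X_pow_eq_monomial]
    simp
    ring
  rw [h, Dx_add hd_add, Dx_monomial hd_add, Dx_monomial hd_add,
    d_one hd_mul, d_neg hd_add]
  simp

lemma Dx_prod {ι : Type*} [DecidableEq ι] (hd_add : ∀ x y, d (x + y) = d x + d y)
    (hd_mul : ∀ x y, d (x * y) = d x * y + x * d y) (s : Finset ι) (a : ι → K) :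
    Dx d (∏ i ∈ s, (X - C (a i))) =
      ∑ i ∈ s, -C (d (a i)) * ∏ j ∈ s.erase i, (X - C (a j)) := by
  induction s using Finset.induction_on with
  | empty =>
    simp only [Finset.prod_empty, Finset.sum_empty]
    have h : (1 : Polynomial K) = monomial 0 1 := by simp
    rw [h, Dx_monomial hd_add, d_one hd_mul]; simp
  | @insert i s' hi ih =>
    rw [Finset.prod_insert hi, Dx_mul hd_add hd_mul, Dx_X_sub_C hd_add hd_mul,
      ih, Finset.sum_insert hi, Finset.erase_insert hi, Finset.mul_sum]
    congr 1
    apply Finset.sum_congr rfl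
    intro k hk
    have hki : k ≠ i := fun h => hi (h ▸ hk)
    rw [Finset.erase_insert_of_ne hki.symm, Finset.prod_insert (by simp [hi, Finset.mem_erase])]
    ring

end aux


section evals
variable {K : Type*} [Field K] {n : ℕ} {a : Fin n → K}

lemma heval_eps_self (i : Fin n) :
    eval (a i) (eps a i) = ∏ j ∈ Finset.univ.erase i, (a i - a j) := by
  simp [eps, eval_prod]

lemma heval_eps_ne {i j : Fin n} (hij : j ≠ i) : eval (a i) (eps a j) = 0 := by
  rw [eps, eval_prod]
  apply Finset.prod_eq_zero (Finset.mem_erase.mpr ⟨hij.symm, Finset.mem_univ i⟩)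
  simp

lemma heval_sum (c : Fin n → K) (i : Fin n) :
    eval (a i) (∑ j, C (c j) * eps a j)
      = c i * ∏ j ∈ Finset.univ.erase i, (a i - a j) := by
  rw [eval_finset_sum, Finset.sum_eq_single i]
  · simp [heval_eps_self]
  · intro j _ hji
    simp [heval_eps_ne hji]
  · simp

lemma heval_f (i : Fin n) : eval (a i) (∏ j, (X - C (a j))) = 0 := by
  rw [eval_prod]
  apply Finset.prod_eq_zero (Finset.mem_univ i)
  simp

lemma hE_ne (ha : Function.Injective a) (i : Fin n) :
    (∏ j ∈ Finset.univ.erase i, (a i - a j)) ≠ 0 := by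
  rw [Finset.prod_ne_zero_iff]
  intro j hj
  rw [Finset.mem_erase] at hj
  exact sub_ne_zero.mpr fun e => hj.1 (ha e.symm)

lemma deriv_prod_finset {ι : Type*} [DecidableEq ι] (s : Finset ι) (b : ι → K) :
    derivative (∏ i ∈ s, (X - C (b i))) = ∑ i ∈ s, ∏ j ∈ s.erase i, (X - C (b j)) := by
  induction s using Finset.induction_on with
  | empty => simp
  | @insert i s' hi ih =>
    rw [Finset.prod_insert hi, derivative_mul, ih, Finset.sum_insert hi,
      Finset.erase_insert hi, Finset.mul_sum]
    simp only [derivative_sub, derivative_X, derivative_C, sub_zero, one_mul]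
    congr 1
    apply Finset.sum_congr rfl
    intro k hk
    have hki : k ≠ i := fun h => hi (h ▸ hk)
    rw [Finset.erase_insert_of_ne hki.symm, Finset.prod_insert (by simp [hi, Finset.mem_erase])]

lemma hderiv_f : derivative (∏ j : Fin n, (X - C (a j))) = ∑ j, eps a j := by
  rw [deriv_prod_finset]
  rfl

end evals


/-- Let `f = ∏ (y - a i)` be reduced of degree `n ≥ 2` over a field `K` with a derivation
`d` (thought of as `∂/∂x`), and let `w = ∑ wc i · ε_i` with `∑ wc i = 0`.  If
`(u = ∑ uc i · ε_i, v = ∑ vc i · ε_i)` solves `u f'_x + v f'_y = w f`, then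
`vc i = uc i · a'_i` and
`wc i = (∑_{j≠i} (a'_i - a'_j)/(a_i - a_j)) uc i - ∑_{j≠i} ((a'_i - a'_j)/(a_i - a_j)) uc j`,
i.e. the column vector of the `wc i` is the complete magic matrix applied to that of the
`uc i`. -/
theorem stmt15 (K : Type*) [Field K] (d : K → K)
    (hd_add : ∀ x y, d (x + y) = d x + d y)
    (hd_mul : ∀ x y, d (x * y) = d x * y + x * d y)
    (n : ℕ) (hn : 2 ≤ n) (a : Fin n → K) (ha : Function.Injective a)
    (wc uc vc : Fin n → K) (hw0 : ∑ i, wc i = 0)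
    (hsol : (∑ i, C (uc i) * eps a i) * Dx d (∏ i, (X - C (a i)))
        + (∑ i, C (vc i) * eps a i) * derivative (∏ i, (X - C (a i)))
        = (∑ i, C (wc i) * eps a i) * ∏ i, (X - C (a i))) :
    (∀ i, vc i = uc i * d (a i)) ∧
    (∀ i, wc i =
      (∑ j ∈ Finset.univ.erase i, (d (a i) - d (a j)) / (a i - a j)) * uc i
        - ∑ j ∈ Finset.univ.erase i, ((d (a i) - d (a j)) / (a i - a j)) * uc j) := by
  classical
  set E : Fin n → K := fun i => ∏ j ∈ Finset.univ.erase i, (a i - a j) with hEdef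
  have hE : ∀ i, E i ≠ 0 := hE_ne ha
  have hDxf : Dx d (∏ i, (X - C (a i))) = ∑ k, C (-d (a k)) * eps a k := by
    rw [Dx_prod hd_add hd_mul]
    refine Finset.sum_congr rfl fun k _ => ?_
    rw [C_neg]; rfl
  have hsumeps : ∀ i : Fin n, eval (a i) (∑ j, eps a j) = E i := by
    intro i
    have h := heval_sum (a := a) (fun _ => (1 : K)) i
    simp only [map_one, one_mul] at h
    exact h
  have hv : ∀ i, vc i = uc i * d (a i) := by
    intro i
    have h := congrArg (eval (a i)) hsol
    rw [eval_add, eval_mul, eval_mul, eval_mul, heval_sum, heval_sum, heval_sum,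
      hDxf, hderiv_f, heval_sum, hsumeps, heval_f] at h
    have h2 : (vc i - uc i * d (a i)) * (E i * E i) = 0 := by linear_combination h
    rcases mul_eq_zero.mp h2 with h3 | h3
    · exact sub_eq_zero.mp h3
    · exact absurd h3 (mul_ne_zero (hE i) (hE i))
  refine ⟨hv, ?_⟩
  -- part 2
  set f : Polynomial K := ∏ i, (X - C (a i)) with hfdef
  have hf_ne : f ≠ 0 := by
    rw [hfdef]
    exact Finset.prod_ne_zero_iff.mpr fun j _ => X_sub_C_ne_zero (a j)
  set h2 : Fin n → Fin n → Polynomial K :=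
    fun i k => ∏ j ∈ (Finset.univ.erase i).erase k, (X - C (a j)) with hh2def
  have heps_mul : ∀ i k : Fin n, k ≠ i → eps a i * eps a k = f * h2 i k := by
    intro i k hk
    have h1 : eps a i = (X - C (a k)) * h2 i k :=
      (Finset.mul_prod_erase _ _ (Finset.mem_erase.mpr ⟨hk, Finset.mem_univ k⟩)).symm
    have h3 : f = (X - C (a k)) * eps a k :=
      (Finset.mul_prod_erase _ _ (Finset.mem_univ k)).symm
    rw [h1, h3]; ring
  set T : Polynomial K :=
    ∑ i, ∑ k ∈ Finset.univ.erase i, C (uc i * (d (a i) - d (a k))) * h2 i k with hTdef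
  have key : f * (∑ i, C (wc i) * eps a i) = f * T := by
    rw [mul_comm f, ← hsol]
    have hvsum : (∑ i, C (vc i) * eps a i) = ∑ i, C (uc i * d (a i)) * eps a i :=
      Finset.sum_congr rfl fun i _ => by rw [hv i]
    rw [hvsum, hDxf, hderiv_f, Finset.sum_mul_sum, Finset.sum_mul_sum,
      ← Finset.sum_add_distrib, hTdef, Finset.mul_sum]
    apply Finset.sum_congr rfl
    intro i _
    rw [← Finset.sum_add_distrib]
    have hsplit : ∀ k, C (uc i) * eps a i * (C (-d (a k)) * eps a k)
        + C (uc i * d (a i)) * eps a i * eps a k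
        = C (uc i * (d (a i) - d (a k))) * (eps a i * eps a k) := by
      intro k
      simp only [C_mul, C_neg, C_sub]
      ring
    rw [Finset.sum_congr rfl (fun k _ => hsplit k),
      ← Finset.add_sum_erase _ _ (Finset.mem_univ i)]
    have hzero : C (uc i * (d (a i) - d (a i))) * (eps a i * eps a i) = 0 := by simp
    rw [hzero, zero_add, Finset.mul_sum]
    apply Finset.sum_congr rfl
    intro k hk
    rw [heps_mul i k (Finset.mem_erase.mp hk).1]
    ring
  have hg : (∑ i, C (wc i) * eps a i) = T := mul_left_cancel₀ hf_ne key
  intro i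
  set Hq : Fin n → Fin n → K :=
    fun p k => ∏ j ∈ (Finset.univ.erase p).erase k, (a p - a j) with hHqdef
  have heval_h2 : ∀ p k : Fin n, eval (a i) (h2 p k)
      = ∏ j ∈ (Finset.univ.erase p).erase k, (a i - a j) := by
    intro p k
    rw [hh2def]
    simp [eval_prod]
  have h := congrArg (eval (a i)) hg
  rw [heval_sum, hTdef, eval_finset_sum,
    ← Finset.add_sum_erase _ _ (Finset.mem_univ i)] at h
  -- evaluate the p = i term
  have hterm_i : eval (a i) (∑ k ∈ Finset.univ.erase i, C (uc i * (d (a i) - d (a k))) * h2 i k)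
      = ∑ k ∈ Finset.univ.erase i, uc i * (d (a i) - d (a k)) * Hq i k := by
    rw [eval_finset_sum]
    apply Finset.sum_congr rfl
    intro k hk
    rw [eval_mul, eval_C, heval_h2]
  -- evaluate the p ≠ i terms
  have hterm_ne : ∀ p ∈ Finset.univ.erase i,
      eval (a i) (∑ k ∈ Finset.univ.erase p, C (uc p * (d (a p) - d (a k))) * h2 p k)
      = uc p * (d (a p) - d (a i)) * Hq i p := by
    intro p hp
    have hpi : p ≠ i := (Finset.mem_erase.mp hp).1
    rw [eval_finset_sum]
    rw [Finset.sum_eq_single_of_mem i (Finset.mem_erase.mpr ⟨hpi.symm, Finset.mem_univ i⟩)]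
    · rw [eval_mul, eval_C, heval_h2]
      congr 1
      rw [hHqdef]
      simp only
      rw [Finset.erase_right_comm]
    · intro k hk hki
      rw [eval_mul, heval_h2]
      have hzero2 : (∏ j ∈ (Finset.univ.erase p).erase k, (a i - a j)) = 0 := by
        apply Finset.prod_eq_zero (i := i)
        · exact Finset.mem_erase.mpr ⟨hki.symm, Finset.mem_erase.mpr ⟨hpi.symm, Finset.mem_univ i⟩⟩
        · simp
      rw [hzero2, mul_zero]
  rw [hterm_i, Finset.sum_congr rfl hterm_ne] at h
  -- final algebra
  have hq : ∀ j ∈ Finset.univ.erase i,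
      ((d (a i) - d (a j)) / (a i - a j)) * E i = (d (a i) - d (a j)) * Hq i j := by
    intro j hj
    have hEsplit : E i = (a i - a j) * Hq i j := (Finset.mul_prod_erase _ _ hj).symm
    have hne : a i - a j ≠ 0 :=
      sub_ne_zero.mpr fun e => (Finset.mem_erase.mp hj).1 (ha e.symm)
    rw [hEsplit]
    field_simp
  apply mul_right_cancel₀ (hE i)
  rw [h, sub_mul, Finset.sum_mul, Finset.sum_mul, Finset.sum_mul,
    ← Finset.sum_sub_distrib, ← Finset.sum_add_distrib]
  apply Finset.sum_congr rfl
  intro j hj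
  have hqq := hq j hj
  calc uc i * (d (a i) - d (a j)) * Hq i j + uc j * (d (a j) - d (a i)) * Hq i j
      = (uc i - uc j) * ((d (a i) - d (a j)) * Hq i j) := by ring
    _ = (uc i - uc j) * ((d (a i) - d (a j)) / (a i - a j) * E i) := by rw [hqq]
    _ = (d (a i) - d (a j)) / (a i - a j) * uc i * E i
        - (d (a i) - d (a j)) / (a i - a j) * uc j * E i := by ring
end
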